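/- arXiv:1802.08623 — 3 statements merged into one kernel-verified Lean document; each statement's English description precedes it below -/
import Mathlib

section
/- Let 1/4 < H < 1 and let ρ be a real number satisfying: ρ < 4H-3 if 1/4 < H < 1/2, and ρ < 2(H-1) if 1/2 ≤ H < 1. Then the series ∑_{k ∈ ℤ²₀} |k|^{4ρ+4} · ( ∑_{h ∈ ℤ²₀, h ≠ k} 1/(|h|^{4H} |k-h|^{4H}) )² converges (is finite). -/
set_option maxHeartbeats 1000000

noncomputable def znorm (k : ℤ × ℤ) : ℝ :=
  Real.sqrt ((k.1 : ℝ) ^ 2 + (k.2 : ℝ) ^ 2)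

lemma znorm_nonneg (k : ℤ × ℤ) : 0 ≤ znorm k := Real.sqrt_nonneg _

lemma znorm_pos {k : ℤ × ℤ} (hk : k ≠ 0) : 0 < znorm k := by
  apply Real.sqrt_pos.mpr
  have h : ¬(k.1 = 0 ∧ k.2 = 0) := by simpa [Prod.ext_iff] using hk
  rcases not_and_or.mp h with h1 | h1
  · have h2 : (k.1 : ℝ) ≠ 0 := Int.cast_ne_zero.mpr h1
    have : (0:ℝ) < (k.1:ℝ) ^ 2 := by positivity
    nlinarith [sq_nonneg (k.2 : ℝ)]
  · have h2 : (k.2 : ℝ) ≠ 0 := Int.cast_ne_zero.mpr h1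
    have : (0:ℝ) < (k.2:ℝ) ^ 2 := by positivity
    nlinarith [sq_nonneg (k.1 : ℝ)]

lemma znorm_triangle (x y : ℤ × ℤ) : znorm x ≤ znorm y + znorm (x - y) := by
  have e : ∀ z : ℤ × ℤ, znorm z = ‖((z.1 : ℝ) + (z.2 : ℝ) * Complex.I : ℂ)‖ := by
    intro z; rw [Complex.norm_add_mul_I]; rfl
  rw [e, e, e]
  have h : ((x.1 : ℝ) + (x.2 : ℝ) * Complex.I) =
      (((y.1 : ℝ) + (y.2 : ℝ) * Complex.I)) + (((x - y).1 : ℝ) + ((x - y).2 : ℝ) * Complex.I) := by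
    simp only [Prod.fst_sub, Prod.snd_sub]
    push_cast; ring
  rw [h]
  exact norm_add_le _ _

lemma abs_le_znorm_fst (k : ℤ × ℤ) : |(k.1 : ℝ)| ≤ znorm k := by
  rw [← Real.sqrt_sq_eq_abs]
  exact Real.sqrt_le_sqrt (by nlinarith [sq_nonneg (k.2 : ℝ)])

lemma abs_le_znorm_snd (k : ℤ × ℤ) : |(k.2 : ℝ)| ≤ znorm k := by
  rw [← Real.sqrt_sq_eq_abs]
  exact Real.sqrt_le_sqrt (by nlinarith [sq_nonneg (k.1 : ℝ)])

lemma summable_znorm_rpow {s : ℝ} (hs : 2 < s) :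
    Summable (fun k : {k : ℤ × ℤ // k ≠ 0} => znorm k.1 ^ (-s)) := by
  have h0 := EisensteinSeries.summable_one_div_norm_rpow hs
  have h1 : Summable (fun k : ℤ × ℤ => ‖(finTwoArrowEquiv ℤ).symm k‖ ^ (-s)) :=
    h0.comp_injective (finTwoArrowEquiv ℤ).symm.injective
  refine ((h1.subtype _).of_nonneg_of_le (fun k => Real.rpow_nonneg (znorm_nonneg _) _) ?_)
  rintro ⟨k, hk⟩
  have hn : ‖(finTwoArrowEquiv ℤ).symm k‖ = ((max k.1.natAbs k.2.natAbs : ℕ) : ℝ) := by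
    rw [EisensteinSeries.norm_eq_max_natAbs]; rfl
  have hk' : ¬(k.1 = 0 ∧ k.2 = 0) := by simpa [Prod.ext_iff] using hk
  have hmpos : 0 < max k.1.natAbs k.2.natAbs := by
    rcases not_and_or.mp hk' with h1' | h1'
    · exact lt_max_of_lt_left (Int.natAbs_pos.mpr h1')
    · exact lt_max_of_lt_right (Int.natAbs_pos.mpr h1')
  have hpos : (0 : ℝ) < ‖(finTwoArrowEquiv ℤ).symm k‖ := by
    rw [hn]; exact_mod_cast hmpos
  have hle : ‖(finTwoArrowEquiv ℤ).symm k‖ ≤ znorm k := by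
    rw [hn]
    rcases max_cases k.1.natAbs k.2.natAbs with ⟨h1', _⟩ | ⟨h1', _⟩ <;> rw [h1']
    · calc ((k.1.natAbs : ℝ)) = |(k.1 : ℝ)| := by rw [Nat.cast_natAbs]; push_cast; ring
        _ ≤ znorm k := abs_le_znorm_fst k
    · calc ((k.2.natAbs : ℝ)) = |(k.2 : ℝ)| := by rw [Nat.cast_natAbs]; push_cast; ring
        _ ≤ znorm k := abs_le_znorm_snd k
  exact Real.rpow_le_rpow_of_nonpos hpos hle (by linarith)

lemma core_ineq {A B K a c : ℝ} (hA : 0 < A) (hB : 0 < B) (hK : 0 < K) (h2 : K ≤ 2 * A)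
    (hc0 : 0 ≤ c) :
    A ^ (-a) * B ^ (-a) ≤ (2 / K) ^ c * (A ^ (-(2 * (a - c))) + B ^ (-(2 * a))) := by
  have e1 : A ^ (-a) = A ^ (-c) * A ^ (-(a - c)) := by
    rw [← Real.rpow_add hA]; ring_nf
  have e2 : A ^ (-c) ≤ (2 / K) ^ c := by
    have h3 : K / 2 ≤ A := by linarith
    have h4 : A ^ (-c) ≤ (K / 2) ^ (-c) :=
      Real.rpow_le_rpow_of_nonpos (by linarith) h3 (neg_nonpos.mpr hc0)
    calc A ^ (-c) ≤ (K / 2) ^ (-c) := h4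
      _ = (2 / K) ^ c := by
          rw [Real.rpow_neg (by positivity), ← Real.inv_rpow (by positivity), inv_div]
  have e4 : A ^ (-(2 * (a - c))) = (A ^ (-(a - c))) ^ 2 := by
    rw [← Real.rpow_natCast (A ^ (-(a - c))) 2, ← Real.rpow_mul hA.le]
    norm_num; ring_nf
  have e5 : B ^ (-(2 * a)) = (B ^ (-a)) ^ 2 := by
    rw [← Real.rpow_natCast (B ^ (-a)) 2, ← Real.rpow_mul hB.le]
    norm_num; ring_nf
  have e3 : A ^ (-(a - c)) * B ^ (-a) ≤ A ^ (-(2 * (a - c))) + B ^ (-(2 * a)) := by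
    rw [e4, e5]
    nlinarith [sq_nonneg (A ^ (-(a - c)) - B ^ (-a))]
  calc A ^ (-a) * B ^ (-a) = A ^ (-c) * (A ^ (-(a - c)) * B ^ (-a)) := by rw [e1]; ring
    _ ≤ (2 / K) ^ c * (A ^ (-(2 * (a - c))) + B ^ (-(2 * a))) := by
        apply mul_le_mul e2 e3 (by positivity) (by positivity)

theorem statement_11 (H ρ : ℝ) (hH1 : 1 / 4 < H) (hH2 : H < 1)
    (hρ1 : 1 / 4 < H → H < 1 / 2 → ρ < 4 * H - 3)
    (hρ2 : 1 / 2 ≤ H → H < 1 → ρ < 2 * (H - 1)) :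
    Summable (fun k : {k : ℤ × ℤ // k ≠ 0} =>
      znorm k.1 ^ (4 * ρ + 4) *
        (∑' h : {h : ℤ × ℤ // h ≠ 0 ∧ h ≠ k.1},
            1 / (znorm h.1 ^ (4 * H) * znorm (k.1 - h.1) ^ (4 * H))) ^ 2) := by
  have hcc : 2 * ρ + 3 < 4 * H - 1 := by
    rcases lt_or_ge H (1 / 2) with h | h
    · have := hρ1 hH1 h; linarith
    · have := hρ2 h hH2; linarith
  have h41 : (0 : ℝ) < 4 * H - 1 := by linarith
  set c : ℝ := (max (2 * ρ + 3) 0 + (4 * H - 1)) / 2 with hc_def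
  have hmax0 : (0 : ℝ) ≤ max (2 * ρ + 3) 0 := le_max_right _ _
  have hmaxlt : max (2 * ρ + 3) 0 < 4 * H - 1 := max_lt hcc h41
  have hc0 : 0 ≤ c := by rw [hc_def]; linarith
  have hclt : c < 4 * H - 1 := by rw [hc_def]; linarith
  have hcgt : 2 * ρ + 3 < c := by
    have := le_max_left (2 * ρ + 3) 0
    rw [hc_def]; linarith
  have hs1 : (2 : ℝ) < 2 * (4 * H - c) := by linarith
  have hs2 : (2 : ℝ) < 2 * (4 * H) := by linarith
  have hsfin : (2 : ℝ) < 2 * c - (4 * ρ + 4) := by linarith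
  have hsum1 := summable_znorm_rpow hs1
  have hsum2 := summable_znorm_rpow hs2
  set C1 : ℝ := ∑' h : {h : ℤ × ℤ // h ≠ 0}, znorm h.1 ^ (-(2 * (4 * H - c))) with hC1
  set C2 : ℝ := ∑' h : {h : ℤ × ℤ // h ≠ 0}, znorm h.1 ^ (-(2 * (4 * H))) with hC2
  have hC1nn : 0 ≤ C1 := tsum_nonneg fun _ => Real.rpow_nonneg (znorm_nonneg _) _
  have hC2nn : 0 ≤ C2 := tsum_nonneg fun _ => Real.rpow_nonneg (znorm_nonneg _) _
  set E : ℝ := C1 + C2 + C2 + C1 with hE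
  have hEnn : 0 ≤ E := by rw [hE]; linarith
  -- key bound on the inner sum
  have key : ∀ k : {k : ℤ × ℤ // k ≠ 0},
      (∑' h : {h : ℤ × ℤ // h ≠ 0 ∧ h ≠ k.1},
        1 / (znorm h.1 ^ (4 * H) * znorm (k.1 - h.1) ^ (4 * H)))
        ≤ (2 / znorm k.1) ^ c * E := by
    intro k
    have hK : 0 < znorm k.1 := znorm_pos k.2
    have h2Knn : (0:ℝ) ≤ 2 / znorm k.1 := div_nonneg (by norm_num) hK.le
    have hpowKnn : (0:ℝ) ≤ (2 / znorm k.1) ^ c := Real.rpow_nonneg h2Knn _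
    let ι₁ : {h : ℤ × ℤ // h ≠ 0 ∧ h ≠ k.1} → {h : ℤ × ℤ // h ≠ 0} :=
      fun h => ⟨h.1, h.2.1⟩
    let ι₂ : {h : ℤ × ℤ // h ≠ 0 ∧ h ≠ k.1} → {h : ℤ × ℤ // h ≠ 0} :=
      fun h => ⟨k.1 - h.1, sub_ne_zero.mpr (Ne.symm h.2.2)⟩
    have hinj1 : Function.Injective ι₁ := by
      intro x y hxy
      have h' := congrArg Subtype.val hxy
      exact Subtype.ext h'
    have hinj2 : Function.Injective ι₂ := by
      intro x y hxy
      have h' := congrArg Subtype.val hxy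
      have h'' : k.1 - x.1 = k.1 - y.1 := h'
      exact Subtype.ext (sub_right_injective h'')
    have hg1 : Summable (fun h : {h : ℤ × ℤ // h ≠ 0 ∧ h ≠ k.1} =>
        znorm h.1 ^ (-(2 * (4 * H - c)))) :=
      (hsum1.comp_injective hinj1).congr (fun h => rfl)
    have hg2 : Summable (fun h : {h : ℤ × ℤ // h ≠ 0 ∧ h ≠ k.1} =>
        znorm (k.1 - h.1) ^ (-(2 * (4 * H)))) :=
      (hsum2.comp_injective hinj2).congr (fun h => rfl)
    have hg3 : Summable (fun h : {h : ℤ × ℤ // h ≠ 0 ∧ h ≠ k.1} =>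
        znorm h.1 ^ (-(2 * (4 * H)))) :=
      (hsum2.comp_injective hinj1).congr (fun h => rfl)
    have hg4 : Summable (fun h : {h : ℤ × ℤ // h ≠ 0 ∧ h ≠ k.1} =>
        znorm (k.1 - h.1) ^ (-(2 * (4 * H - c)))) :=
      (hsum1.comp_injective hinj2).congr (fun h => rfl)
    have hgsum : Summable (fun h : {h : ℤ × ℤ // h ≠ 0 ∧ h ≠ k.1} =>
        znorm h.1 ^ (-(2 * (4 * H - c))) + znorm (k.1 - h.1) ^ (-(2 * (4 * H)))
          + znorm h.1 ^ (-(2 * (4 * H))) + znorm (k.1 - h.1) ^ (-(2 * (4 * H - c)))) :=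
      ((hg1.add hg2).add hg3).add hg4
    have hpt : ∀ h : {h : ℤ × ℤ // h ≠ 0 ∧ h ≠ k.1},
        1 / (znorm h.1 ^ (4 * H) * znorm (k.1 - h.1) ^ (4 * H)) ≤
          (2 / znorm k.1) ^ c *
            (znorm h.1 ^ (-(2 * (4 * H - c))) + znorm (k.1 - h.1) ^ (-(2 * (4 * H)))
              + znorm h.1 ^ (-(2 * (4 * H))) + znorm (k.1 - h.1) ^ (-(2 * (4 * H - c)))) := by
      intro h
      have hA : 0 < znorm h.1 := znorm_pos h.2.1
      have hB : 0 < znorm (k.1 - h.1) := znorm_pos (sub_ne_zero.mpr (Ne.symm h.2.2))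
      set A := znorm h.1
      set B := znorm (k.1 - h.1)
      have hf : 1 / (A ^ (4 * H) * B ^ (4 * H)) = A ^ (-(4 * H)) * B ^ (-(4 * H)) := by
        rw [Real.rpow_neg hA.le, Real.rpow_neg hB.le, one_div, mul_inv]
      have n1 : 0 ≤ A ^ (-(2 * (4 * H - c))) := Real.rpow_nonneg hA.le _
      have n2 : 0 ≤ B ^ (-(2 * (4 * H))) := Real.rpow_nonneg hB.le _
      have n3 : 0 ≤ A ^ (-(2 * (4 * H))) := Real.rpow_nonneg hA.le _
      have n4 : 0 ≤ B ^ (-(2 * (4 * H - c))) := Real.rpow_nonneg hB.le _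
      have htri : znorm k.1 ≤ A + B := znorm_triangle k.1 h.1
      rw [hf]
      rcases le_total A B with hAB | hAB
      · have h2 : znorm k.1 ≤ 2 * B := by linarith
        have hcore := core_ineq (a := 4 * H) hB hA hK h2 hc0
        calc A ^ (-(4 * H)) * B ^ (-(4 * H)) = B ^ (-(4 * H)) * A ^ (-(4 * H)) := mul_comm _ _
          _ ≤ (2 / znorm k.1) ^ c * (B ^ (-(2 * (4 * H - c))) + A ^ (-(2 * (4 * H)))) := hcore
          _ ≤ _ := by apply mul_le_mul_of_nonneg_left _ hpowKnn; linarith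
      · have h2 : znorm k.1 ≤ 2 * A := by linarith
        have hcore := core_ineq (a := 4 * H) hA hB hK h2 hc0
        calc A ^ (-(4 * H)) * B ^ (-(4 * H))
            ≤ (2 / znorm k.1) ^ c * (A ^ (-(2 * (4 * H - c))) + B ^ (-(2 * (4 * H)))) := hcore
          _ ≤ _ := by apply mul_le_mul_of_nonneg_left _ hpowKnn; linarith
    have hfs : Summable (fun h : {h : ℤ × ℤ // h ≠ 0 ∧ h ≠ k.1} =>
        1 / (znorm h.1 ^ (4 * H) * znorm (k.1 - h.1) ^ (4 * H))) := by
      refine (hgsum.mul_left ((2 / znorm k.1) ^ c)).of_nonneg_of_le (fun h => ?_) hpt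
      exact one_div_nonneg.mpr (mul_nonneg (Real.rpow_nonneg (znorm_nonneg _) _)
        (Real.rpow_nonneg (znorm_nonneg _) _))
    have ht1 : (∑' h : {h : ℤ × ℤ // h ≠ 0 ∧ h ≠ k.1}, znorm h.1 ^ (-(2 * (4 * H - c)))) ≤ C1 :=
      hg1.tsum_le_tsum_of_inj ι₁ hinj1 (fun _ _ => Real.rpow_nonneg (znorm_nonneg _) _)
        (fun _ => le_rfl) hsum1
    have ht2 : (∑' h : {h : ℤ × ℤ // h ≠ 0 ∧ h ≠ k.1},
        znorm (k.1 - h.1) ^ (-(2 * (4 * H)))) ≤ C2 :=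
      hg2.tsum_le_tsum_of_inj ι₂ hinj2 (fun _ _ => Real.rpow_nonneg (znorm_nonneg _) _)
        (fun _ => le_rfl) hsum2
    have ht3 : (∑' h : {h : ℤ × ℤ // h ≠ 0 ∧ h ≠ k.1}, znorm h.1 ^ (-(2 * (4 * H)))) ≤ C2 :=
      hg3.tsum_le_tsum_of_inj ι₁ hinj1 (fun _ _ => Real.rpow_nonneg (znorm_nonneg _) _)
        (fun _ => le_rfl) hsum2
    have ht4 : (∑' h : {h : ℤ × ℤ // h ≠ 0 ∧ h ≠ k.1},
        znorm (k.1 - h.1) ^ (-(2 * (4 * H - c)))) ≤ C1 :=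
      hg4.tsum_le_tsum_of_inj ι₂ hinj2 (fun _ _ => Real.rpow_nonneg (znorm_nonneg _) _)
        (fun _ => le_rfl) hsum1
    calc (∑' h : {h : ℤ × ℤ // h ≠ 0 ∧ h ≠ k.1},
            1 / (znorm h.1 ^ (4 * H) * znorm (k.1 - h.1) ^ (4 * H)))
        ≤ ∑' h : {h : ℤ × ℤ // h ≠ 0 ∧ h ≠ k.1}, (2 / znorm k.1) ^ c *
            (znorm h.1 ^ (-(2 * (4 * H - c))) + znorm (k.1 - h.1) ^ (-(2 * (4 * H)))
              + znorm h.1 ^ (-(2 * (4 * H))) + znorm (k.1 - h.1) ^ (-(2 * (4 * H - c)))) :=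
          hfs.tsum_le_tsum hpt (hgsum.mul_left _)
      _ = (2 / znorm k.1) ^ c *
            ∑' h : {h : ℤ × ℤ // h ≠ 0 ∧ h ≠ k.1},
              (znorm h.1 ^ (-(2 * (4 * H - c))) + znorm (k.1 - h.1) ^ (-(2 * (4 * H)))
                + znorm h.1 ^ (-(2 * (4 * H))) + znorm (k.1 - h.1) ^ (-(2 * (4 * H - c)))) :=
          tsum_mul_left
      _ ≤ (2 / znorm k.1) ^ c * E := by
          apply mul_le_mul_of_nonneg_left _ hpowKnn
          rw [Summable.tsum_add ((hg1.add hg2).add hg3) hg4, Summable.tsum_add (hg1.add hg2) hg3,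
            Summable.tsum_add hg1 hg2, hE]
          linarith
  -- conclusion
  refine ((summable_znorm_rpow hsfin).mul_left ((2 ^ c * E) ^ 2)).of_nonneg_of_le
    (fun k => mul_nonneg (Real.rpow_nonneg (znorm_nonneg _) _) (sq_nonneg _)) (fun k => ?_)
  have hK : 0 < znorm k.1 := znorm_pos k.2
  have hS0 : 0 ≤ ∑' h : {h : ℤ × ℤ // h ≠ 0 ∧ h ≠ k.1},
      1 / (znorm h.1 ^ (4 * H) * znorm (k.1 - h.1) ^ (4 * H)) :=
    tsum_nonneg fun h => one_div_nonneg.mpr (mul_nonneg (Real.rpow_nonneg (znorm_nonneg _) _)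
      (Real.rpow_nonneg (znorm_nonneg _) _))
  have h2' : (∑' h : {h : ℤ × ℤ // h ≠ 0 ∧ h ≠ k.1},
      1 / (znorm h.1 ^ (4 * H) * znorm (k.1 - h.1) ^ (4 * H))) ^ 2
      ≤ ((2 / znorm k.1) ^ c * E) ^ 2 := pow_le_pow_left₀ hS0 (key k) 2
  have h3' : znorm k.1 ^ (4 * ρ + 4) *
      (∑' h : {h : ℤ × ℤ // h ≠ 0 ∧ h ≠ k.1},
        1 / (znorm h.1 ^ (4 * H) * znorm (k.1 - h.1) ^ (4 * H))) ^ 2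
      ≤ znorm k.1 ^ (4 * ρ + 4) * ((2 / znorm k.1) ^ c * E) ^ 2 :=
    mul_le_mul_of_nonneg_left h2' (Real.rpow_nonneg (znorm_nonneg _) _)
  refine h3'.trans_eq ?_
  rw [Real.div_rpow (by norm_num) hK.le,
    show -(2 * c - (4 * ρ + 4)) = (4 * ρ + 4) - 2 * c by ring, Real.rpow_sub hK]
  have e1 : znorm k.1 ^ (2 * c) = (znorm k.1 ^ c) ^ 2 := by
    rw [← Real.rpow_natCast (znorm k.1 ^ c) 2, ← Real.rpow_mul hK.le]
    norm_num; ring_nf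
  rw [e1]
  have hKc : (znorm k.1 ^ c) ≠ 0 := (Real.rpow_pos_of_pos hK c).ne'
  field_simp
end

section
/- Let H > 1/4 and for a real number a ≥ 2 let D̃_a = ℝ² \ (B₁((0,0)) ∪ B₁((a,0))), where B₁(c) is the open unit ball centered at c, and let I₁(a) = ∫∫_{D̃_a} dx dy / ((x² + y²)^{2H} ((x-a)² + y²)^{2H}). Then I₁(a) is finite for all a ≥ 2, and there exist constants (independent of a): M_H > 0 with I₁(a) ≤ M_H a^{-(8H-2)} for all a ≥ 2 if 1/4 < H < 1/2; M > 0 with I₁(a) ≤ M (ln a)/a² for all a ≥ 2 if H = 1/2; and M_H > 0 with I₁(a) ≤ M_H a^{-4H} for all a ≥ 2 if H > 1/2. -/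
open MeasureTheory Set ENNReal

/-- The region `ℝ² \\ (B₁((0,0)) ∪ B₁((a,0)))`: the plane with the two open unit balls
centered at the origin and at `(a,0)` removed. -/
def Dtilde (a : ℝ) : Set (ℝ × ℝ) :=
  {p : ℝ × ℝ | 1 ≤ p.1 ^ 2 + p.2 ^ 2 ∧ 1 ≤ (p.1 - a) ^ 2 + p.2 ^ 2}

namespace Statement17Aux



lemma sq_max_le (x y : ℝ) : (max |x| |y|) ^ 2 ≤ x ^ 2 + y ^ 2 := by
  rcases le_total |x| |y| with h | h
  · rw [max_eq_right h, ← sq_abs y]; nlinarith [sq_nonneg x]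
  · rw [max_eq_left h, ← sq_abs x]; nlinarith [sq_nonneg y]

lemma contBase {c : ℝ} (hc : 0 < c) (e : ℝ) :
    Continuous fun x : ℝ => (max c |x|) ^ e :=
  (continuous_const.max continuous_abs).rpow_const
    fun x => Or.inl (ne_of_gt (lt_of_lt_of_le hc (le_max_left _ _)))

lemma meas1D {c : ℝ} (hc : 0 < c) (e : ℝ) :
    Measurable fun x : ℝ => ENNReal.ofReal ((max c |x|) ^ e) :=
  ((contBase hc e).measurable).ennreal_ofReal

lemma meas2D {c : ℝ} (hc : 0 < c) (e : ℝ) :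
    Measurable fun p : ℝ × ℝ => ENNReal.ofReal ((max (max c |p.1|) |p.2|) ^ e) := by
  have : Continuous fun p : ℝ × ℝ => (max (max c |p.1|) |p.2|) ^ e := by
    apply Continuous.rpow_const
    · exact ((continuous_const.max (continuous_abs.comp continuous_fst)).max
        (continuous_abs.comp continuous_snd))
    · intro p
      exact Or.inl (ne_of_gt (lt_of_lt_of_le hc
        (le_trans (le_max_left _ _) (le_max_left _ _))))
  exact this.measurable.ennreal_ofReal

lemma lintegral_comp_neg (g : ℝ → ℝ≥0∞) (hg : Measurable g) :
    ∫⁻ x, g (-x) = ∫⁻ x, g x :=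
  (Measure.measurePreserving_neg (volume : Measure ℝ)).lintegral_comp hg

lemma lemEven {g : ℝ → ℝ≥0∞} (hg : Measurable g) (hsym : ∀ x, g (-x) = g x)
    {s : Set ℝ} (hs : MeasurableSet s) :
    ∫⁻ x in (fun x : ℝ => -x) ⁻¹' s, g x = ∫⁻ x in s, g x := by
  rw [← lintegral_indicator hs, ← lintegral_indicator (hs.preimage measurable_neg),
    ← lintegral_comp_neg (s.indicator g) (hg.indicator hs)]
  congr 1; funext x
  by_cases hx : -x ∈ s
  · rw [Set.indicator_of_mem hx, Set.indicator_of_mem (by simpa using hx), hsym]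
  · rw [Set.indicator_of_notMem hx, Set.indicator_of_notMem (by simpa using hx)]

lemma lemTail {q c : ℝ} (hq : q < -1) (hc : 0 < c) :
    ∫⁻ x in Ioi c, ENNReal.ofReal (x ^ q) = ENNReal.ofReal (c ^ (q + 1) / (-q - 1)) := by
  rw [← ofReal_integral_eq_lintegral_ofReal (integrableOn_Ioi_rpow_of_lt hq hc)
      (by filter_upwards [ae_restrict_mem measurableSet_Ioi] with x hx
          exact Real.rpow_nonneg (le_of_lt (hc.trans hx)) _)]
  rw [integral_Ioi_rpow_of_lt hq hc]
  congr 1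
  rw [show -q - 1 = -(q + 1) by ring, div_neg, neg_div]

lemma lemA {b m : ℝ} (hb : 1 < b) (hm : 0 < m) :
    ∫⁻ y : ℝ, ENNReal.ofReal ((max m |y|) ^ (-b)) ≤
      ENNReal.ofReal ((2 + 2 / (b - 1)) * m ^ (1 - b)) := by
  set F : ℝ → ℝ≥0∞ := fun y => ENNReal.ofReal ((max m |y|) ^ (-b)) with hF
  have hFmeas : Measurable F := meas1D hm (-b)
  have hFsym : ∀ x, F (-x) = F x := fun x => by simp [hF, abs_neg]
  have hcover : (univ : Set ℝ) ⊆ Icc (-m) m ∪ (Iio (-m) ∪ Ioi m) := by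
    intro x _
    by_cases h1 : x < -m
    · exact Or.inr (Or.inl h1)
    by_cases h2 : m < x
    · exact Or.inr (Or.inr h2)
    · exact Or.inl ⟨not_lt.1 h1, not_lt.1 h2⟩
  have hIoi : ∫⁻ y in Ioi m, F y = ENNReal.ofReal (m ^ (1 - b) / (b - 1)) := by
    have hcg : ∫⁻ y in Ioi m, F y = ∫⁻ y in Ioi m, ENNReal.ofReal (y ^ (-b)) := by
      apply setLIntegral_congr_fun measurableSet_Ioi
      intro y hy
      have h1 : |y| = y := abs_of_pos (hm.trans hy)
      simp only [hF]
      rw [h1, max_eq_right (le_of_lt hy)]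
    rw [hcg, lemTail (by linarith) hm]
    congr 2 <;> ring
  have hIio : ∫⁻ y in Iio (-m), F y = ENNReal.ofReal (m ^ (1 - b) / (b - 1)) := by
    have hpre : (fun x : ℝ => -x) ⁻¹' Ioi m = Iio (-m) := by
      ext x; simp [lt_neg]
    rw [← hpre, lemEven hFmeas hFsym measurableSet_Ioi, hIoi]
  have hIcc : ∫⁻ y in Icc (-m) m, F y ≤ ENNReal.ofReal (2 * m ^ (1 - b)) := by
    calc ∫⁻ y in Icc (-m) m, F y
        ≤ ∫⁻ _ in Icc (-m) m, ENNReal.ofReal (m ^ (-b)) := by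
          apply setLIntegral_mono measurable_const
          intro x _
          exact ENNReal.ofReal_le_ofReal
            (Real.rpow_le_rpow_of_nonpos hm (le_max_left _ _) (by linarith))
      _ = ENNReal.ofReal (m ^ (-b)) * volume (Icc (-m) m) := setLIntegral_const _ _
      _ = ENNReal.ofReal (2 * m ^ (1 - b)) := by
          rw [Real.volume_Icc, ← ENNReal.ofReal_mul (Real.rpow_nonneg hm.le _)]
          congr 1
          have : m ^ (-b) * m ^ (1 : ℝ) = m ^ (1 - b) := by
            rw [← Real.rpow_add hm]; ring_nf
          rw [show m - -m = 2 * m by ring]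
          calc m ^ (-b) * (2 * m) = 2 * (m ^ (-b) * m ^ (1:ℝ)) := by
                rw [Real.rpow_one]; ring
            _ = 2 * m ^ (1 - b) := by rw [this]
  calc ∫⁻ y, F y = ∫⁻ y in univ, F y := (setLIntegral_univ _).symm
    _ ≤ ∫⁻ y in Icc (-m) m ∪ (Iio (-m) ∪ Ioi m), F y := lintegral_mono_set hcover
    _ ≤ (∫⁻ y in Icc (-m) m, F y) + (∫⁻ y in Iio (-m) ∪ Ioi m, F y) :=
        lintegral_union_le _ _ _
    _ ≤ (∫⁻ y in Icc (-m) m, F y) + ((∫⁻ y in Iio (-m), F y) + ∫⁻ y in Ioi m, F y) := by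
        gcongr; exact lintegral_union_le _ _ _
    _ ≤ ENNReal.ofReal (2 * m ^ (1 - b)) +
        (ENNReal.ofReal (m ^ (1 - b) / (b - 1)) + ENNReal.ofReal (m ^ (1 - b) / (b - 1))) := by
        rw [hIio, hIoi]; gcongr
    _ = ENNReal.ofReal ((2 + 2 / (b - 1)) * m ^ (1 - b)) := by
        have h0 : (0:ℝ) ≤ m ^ (1 - b) := Real.rpow_nonneg hm.le _
        have h1 : (0:ℝ) ≤ m ^ (1 - b) / (b - 1) := div_nonneg h0 (by linarith)
        rw [← ENNReal.ofReal_add h1 h1,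
          ← ENNReal.ofReal_add (by linarith) (by linarith)]
        congr 1; ring




-- assume part1 lemmas exist; use sorry placeholders here for speed

lemma lemB {b c : ℝ} (hb : 1 < b) (hc : 0 < c) {A : Set ℝ} (hA : MeasurableSet A) :
    ∫⁻ p in A ×ˢ (univ : Set ℝ), ENNReal.ofReal ((max (max c |p.1|) |p.2|) ^ (-b)) ≤
      ∫⁻ x in A, ENNReal.ofReal ((2 + 2 / (b - 1)) * (max c |x|) ^ (1 - b)) := by
  rw [Measure.volume_eq_prod, ← Measure.prod_restrict, Measure.restrict_univ]
  rw [lintegral_prod _ ((meas2D hc (-b)).aemeasurable)]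
  refine lintegral_mono fun x => ?_
  exact lemA hb (lt_of_lt_of_le hc (le_max_left _ _))

lemma lemKmid {b R : ℝ} (hR : 1 ≤ R) :
    ∫⁻ x in Icc 1 R, ENNReal.ofReal ((max 1 |x|) ^ (1 - b)) =
      ENNReal.ofReal (∫ x in (1:ℝ)..R, x ^ (1 - b)) := by
  have hInt : IntegrableOn (fun x : ℝ => x ^ (1 - b)) (Icc 1 R) := by
    apply ContinuousOn.integrableOn_compact isCompact_Icc
    apply ContinuousOn.rpow_const continuousOn_id
    intro x hx
    exact Or.inl (ne_of_gt (lt_of_lt_of_le zero_lt_one hx.1))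
  have hcg : ∫⁻ x in Icc 1 R, ENNReal.ofReal ((max 1 |x|) ^ (1 - b)) =
      ∫⁻ x in Icc 1 R, ENNReal.ofReal (x ^ (1 - b)) := by
    apply setLIntegral_congr_fun measurableSet_Icc
    intro x hx
    beta_reduce
    rw [abs_of_nonneg (le_trans zero_le_one hx.1), max_eq_right hx.1]
  rw [hcg, ← ofReal_integral_eq_lintegral_ofReal hInt
    (by filter_upwards [ae_restrict_mem measurableSet_Icc] with x hx
        exact Real.rpow_nonneg (le_trans zero_le_one hx.1) _)]
  congr 1
  rw [intervalIntegral.integral_of_le hR, ← integral_Icc_eq_integral_Ioc]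

lemma lemK_main {b R : ℝ} (hb : 1 < b) (hR : 1 ≤ R) {J : ℝ} (hJ : 0 ≤ J)
    (hmid : ∫⁻ x in Icc 1 R, ENNReal.ofReal ((max 1 |x|) ^ (1 - b)) ≤ ENNReal.ofReal J) :
    ∫⁻ x in Icc (-R) R, ENNReal.ofReal ((max 1 |x|) ^ (1 - b)) ≤
      ENNReal.ofReal (2 + 2 * J) := by
  set F : ℝ → ℝ≥0∞ := fun x => ENNReal.ofReal ((max 1 |x|) ^ (1 - b)) with hF
  have hFmeas : Measurable F := meas1D one_pos (1 - b)
  have hFsym : ∀ x, F (-x) = F x := fun x => by simp [hF, abs_neg]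
  have hcover : Icc (-R) R ⊆ Icc (-1) 1 ∪ (Icc (-R) (-1) ∪ Icc 1 R) := by
    intro x hx
    rcases le_total x (-1) with h | h
    · exact Or.inr (Or.inl ⟨hx.1, h⟩)
    rcases le_total 1 x with h' | h'
    · exact Or.inr (Or.inr ⟨h', hx.2⟩)
    · exact Or.inl ⟨h, h'⟩
  have hneg : ∫⁻ x in Icc (-R) (-1), F x = ∫⁻ x in Icc 1 R, F x := by
    have hpre : (fun x : ℝ => -x) ⁻¹' Icc 1 R = Icc (-R) (-1) := by
      ext x
      simp only [mem_preimage, mem_Icc]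
      constructor <;> intro h <;> constructor <;> linarith [h.1, h.2]
    rw [← hpre, lemEven hFmeas hFsym measurableSet_Icc]
  have h11 : ∫⁻ x in Icc (-1) 1, F x ≤ ENNReal.ofReal 2 := by
    calc ∫⁻ x in Icc (-1) 1, F x ≤ ∫⁻ _ in Icc (-(1:ℝ)) 1, ENNReal.ofReal 1 := by
          apply setLIntegral_mono measurable_const
          intro x _
          exact ENNReal.ofReal_le_ofReal
            (Real.rpow_le_one_of_one_le_of_nonpos (le_max_left _ _) (by linarith))
      _ = ENNReal.ofReal 1 * volume (Icc (-(1:ℝ)) 1) := setLIntegral_const _ _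
      _ = ENNReal.ofReal 2 := by
          rw [Real.volume_Icc]
          rw [← ENNReal.ofReal_mul (by norm_num)]
          norm_num
  calc ∫⁻ x in Icc (-R) R, F x
      ≤ ∫⁻ x in Icc (-1) 1 ∪ (Icc (-R) (-1) ∪ Icc 1 R), F x := lintegral_mono_set hcover
    _ ≤ (∫⁻ x in Icc (-1) 1, F x) + (∫⁻ x in Icc (-R) (-1) ∪ Icc 1 R, F x) :=
        lintegral_union_le _ _ _
    _ ≤ (∫⁻ x in Icc (-1) 1, F x) + ((∫⁻ x in Icc (-R) (-1), F x) + ∫⁻ x in Icc 1 R, F x) := by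
        gcongr; exact lintegral_union_le _ _ _
    _ ≤ ENNReal.ofReal 2 + (ENNReal.ofReal J + ENNReal.ofReal J) := by
        rw [hneg]; gcongr
    _ = ENNReal.ofReal (2 + 2 * J) := by
        rw [← ENNReal.ofReal_add hJ hJ, ← ENNReal.ofReal_add (by norm_num) (by linarith)]
        congr 1; ring






lemma znotmem {R : ℝ} (hR : 1 ≤ R) : (0:ℝ) ∉ Set.uIcc 1 R := by
  rw [Set.uIcc_of_le hR]
  intro h
  exact absurd h.1 (by norm_num)

lemma Kbound_lt {b R : ℝ} (hb1 : 1 < b) (hb2 : b < 2) (hR : 1 ≤ R) :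
    ∫⁻ x in Icc (-R) R, ENNReal.ofReal ((max 1 |x|) ^ (1 - b)) ≤
      ENNReal.ofReal (2 + 2 * (R ^ (2 - b) / (2 - b))) := by
  apply lemK_main hb1 hR (div_nonneg (Real.rpow_nonneg (by linarith) _) (by linarith))
  rw [lemKmid hR]
  apply ENNReal.ofReal_le_ofReal
  rw [integral_rpow (Or.inr ⟨by intro h; rw [sub_eq_iff_eq_add] at h; linarith, znotmem hR⟩)]
  rw [show (1:ℝ) - b + 1 = 2 - b by ring, Real.one_rpow]
  have h2b : (0:ℝ) < 2 - b := by linarith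
  have h0 : (0:ℝ) ≤ R ^ (2 - b) := Real.rpow_nonneg (by linarith) _
  gcongr <;> linarith

lemma Kbound_eq {R : ℝ} (hR : 1 ≤ R) :
    ∫⁻ x in Icc (-R) R, ENNReal.ofReal ((max 1 |x|) ^ (1 - (2:ℝ))) ≤
      ENNReal.ofReal (2 + 2 * Real.log R) := by
  apply lemK_main one_lt_two hR (Real.log_nonneg hR)
  rw [lemKmid hR]
  apply ENNReal.ofReal_le_ofReal
  have hEq : Set.EqOn (fun x : ℝ => x ^ ((1:ℝ) - 2)) (fun x : ℝ => x⁻¹) (Set.uIcc 1 R) := by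
    intro x hx
    rw [Set.uIcc_of_le hR] at hx
    simp only
    rw [show (1:ℝ) - 2 = -1 by norm_num, Real.rpow_neg_one]
  rw [intervalIntegral.integral_congr hEq, integral_inv (znotmem hR), div_one]

lemma Kbound_gt {b R : ℝ} (hb : 2 < b) (hR : 1 ≤ R) :
    ∫⁻ x in Icc (-R) R, ENNReal.ofReal ((max 1 |x|) ^ (1 - b)) ≤
      ENNReal.ofReal (2 + 2 * (1 / (b - 2))) := by
  apply lemK_main (by linarith) hR (div_nonneg zero_le_one (by linarith))
  rw [lemKmid hR]
  apply ENNReal.ofReal_le_ofReal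
  rw [integral_rpow (Or.inr ⟨by intro h; rw [sub_eq_iff_eq_add] at h; linarith, znotmem hR⟩)]
  rw [show (1:ℝ) - b + 1 = 2 - b by ring, Real.one_rpow]
  have h1 : R ^ (2 - b) ≤ 1 :=
    Real.rpow_le_one_of_one_le_of_nonpos hR (by linarith)
  have h0 : (0:ℝ) ≤ R ^ (2 - b) := Real.rpow_nonneg (by linarith) _
  have hkey : (R ^ (2 - b) - 1) / (2 - b) = (1 - R ^ (2 - b)) / (b - 2) := by
    rw [div_eq_div_iff (show (2:ℝ) - b ≠ 0 by linarith) (show b - 2 ≠ 0 by linarith)]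
    ring
  rw [hkey]
  gcongr <;> linarith





noncomputable def fint (H a : ℝ) (p : ℝ × ℝ) : ℝ :=
  1 / ((p.1 ^ 2 + p.2 ^ 2) ^ (2 * H) * ((p.1 - a) ^ 2 + p.2 ^ 2) ^ (2 * H))

lemma fint_nonneg (H a : ℝ) (p : ℝ × ℝ) : 0 ≤ fint H a p := by
  unfold fint
  have h1 : (0:ℝ) ≤ (p.1 ^ 2 + p.2 ^ 2) ^ (2 * H) := Real.rpow_nonneg (by positivity) _
  have h2 : (0:ℝ) ≤ ((p.1 - a) ^ 2 + p.2 ^ 2) ^ (2 * H) := Real.rpow_nonneg (by positivity) _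
  positivity

lemma fint_meas {H : ℝ} (hH : 0 ≤ 2 * H) (a : ℝ) : Measurable (fint H a) := by
  have c1 : Continuous fun p : ℝ × ℝ => (p.1 ^ 2 + p.2 ^ 2) ^ (2 * H) *
      ((p.1 - a) ^ 2 + p.2 ^ 2) ^ (2 * H) := by
    apply Continuous.mul
    · exact Continuous.rpow_const (by continuity) fun p => Or.inr hH
    · exact Continuous.rpow_const (by continuity) fun p => Or.inr hH
  have heq : fint H a = fun p => ((p.1 ^ 2 + p.2 ^ 2) ^ (2 * H) *
      ((p.1 - a) ^ 2 + p.2 ^ 2) ^ (2 * H))⁻¹ := funext fun p => one_div _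
  rw [heq]
  exact c1.measurable.inv

def S1 (a : ℝ) : Set (ℝ × ℝ) :=
  Dtilde a ∩ {p | a ≤ 2 * max |p.1 - a| |p.2| ∧ max |p.1| |p.2| ≤ 2 * a}

def S2 (a : ℝ) : Set (ℝ × ℝ) :=
  Dtilde a ∩ {p | a ≤ 2 * max |p.1| |p.2| ∧ max |p.1 - a| |p.2| ≤ 2 * a}

def S3 (a : ℝ) : Set (ℝ × ℝ) := {p | 2 * a ≤ max |p.1| |p.2|}

lemma measU : Measurable fun p : ℝ × ℝ => max |p.1| |p.2| :=
  (measurable_fst.abs).max (measurable_snd.abs)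

lemma measV (a : ℝ) : Measurable fun p : ℝ × ℝ => max |p.1 - a| |p.2| :=
  ((measurable_fst.sub measurable_const).abs).max (measurable_snd.abs)

lemma measD (a : ℝ) : MeasurableSet (Dtilde a) := by
  have h1 : Measurable fun p : ℝ × ℝ => p.1 ^ 2 + p.2 ^ 2 := by measurability
  have h2 : Measurable fun p : ℝ × ℝ => (p.1 - a) ^ 2 + p.2 ^ 2 := by measurability
  exact (measurableSet_le measurable_const h1).inter (measurableSet_le measurable_const h2)

lemma measS1 (a : ℝ) : MeasurableSet (S1 a) :=
  (measD a).inter ((measurableSet_le measurable_const ((measV a).const_mul 2)).inter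
    (measurableSet_le measU measurable_const))

lemma measS2 (a : ℝ) : MeasurableSet (S2 a) :=
  (measD a).inter ((measurableSet_le measurable_const (measU.const_mul 2)).inter
    (measurableSet_le (measV a) measurable_const))

lemma measS3 (a : ℝ) : MeasurableSet (S3 a) :=
  measurableSet_le measurable_const measU

lemma cover {a : ℝ} (ha : 2 ≤ a) : Dtilde a ⊆ S1 a ∪ S2 a ∪ S3 a := by
  intro p hp
  set u := max |p.1| |p.2| with hu
  set v := max |p.1 - a| |p.2| with hv
  have huv : a ≤ u + v := by
    have h1 : p.1 ≤ |p.1| := le_abs_self p.1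
    have h2 : a - p.1 ≤ |p.1 - a| := by
      rw [abs_sub_comm]; exact le_abs_self _
    have h3 : |p.1| ≤ u := le_max_left _ _
    have h4 : |p.1 - a| ≤ v := le_max_left _ _
    linarith
  by_cases h3 : 2 * a ≤ u
  · exact Or.inr h3
  push_neg at h3
  by_cases hv2 : a ≤ 2 * v
  · exact Or.inl (Or.inl ⟨hp, hv2, by linarith⟩)
  · push_neg at hv2
    exact Or.inl (Or.inr ⟨hp, by linarith, by linarith⟩)

lemma rpow_sq_le {t P e : ℝ} (ht : 0 ≤ t) (h : t ^ 2 ≤ P) (he : 0 ≤ e) :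
    t ^ (2 * e) ≤ P ^ e := by
  have h2 : t ^ (2 * e) = (t ^ 2) ^ e := by
    rw [← Real.rpow_natCast t 2, ← Real.rpow_mul ht]
    norm_num
  rw [h2]
  exact Real.rpow_le_rpow (sq_nonneg t) h he

lemma ptS1 {H a : ℝ} (hH : 0 ≤ H) (ha : 2 ≤ a) {p : ℝ × ℝ} (hp : p ∈ S1 a) :
    fint H a p ≤ (2 / a) ^ (4 * H) * (max (max 1 |p.1|) |p.2|) ^ (-(4 * H)) := by
  obtain ⟨⟨hP1, hQ1⟩, hv, hu⟩ := hp
  have ha0 : (0:ℝ) < a := by linarith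
  set u := max |p.1| |p.2| with hudef
  set m := max 1 u with hmdef
  have hbase : max (max 1 |p.1|) |p.2| = m := by rw [hmdef, hudef, max_assoc]
  rw [hbase]
  have hm1 : (1:ℝ) ≤ m := le_max_left _ _
  have hm0 : (0:ℝ) < m := lt_of_lt_of_le one_pos hm1
  have hmP : m ^ 2 ≤ p.1 ^ 2 + p.2 ^ 2 := by
    rcases max_cases (1:ℝ) u with ⟨heq, _⟩ | ⟨heq, _⟩
    · rw [show m ^ 2 = (1:ℝ) ^ 2 by rw [hmdef]; exact congrArg (· ^ 2) heq]
      simpa using hP1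
    · rw [show m ^ 2 = u ^ 2 by rw [hmdef]; exact congrArg (· ^ 2) heq]
      exact sq_max_le p.1 p.2
  have hva : a / 2 ≤ max |p.1 - a| |p.2| := by linarith
  have hQa : (a / 2) ^ 2 ≤ (p.1 - a) ^ 2 + p.2 ^ 2 :=
    le_trans (by nlinarith) (sq_max_le (p.1 - a) p.2)
  have h4H : 4 * H = 2 * (2 * H) := by ring
  have h2H : (0:ℝ) ≤ 2 * H := by linarith
  have hden1 : m ^ (4 * H) ≤ (p.1 ^ 2 + p.2 ^ 2) ^ (2 * H) := by
    rw [h4H]; exact rpow_sq_le hm0.le hmP h2H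
  have hden2 : (a / 2) ^ (4 * H) ≤ ((p.1 - a) ^ 2 + p.2 ^ 2) ^ (2 * H) := by
    rw [h4H]; exact rpow_sq_le (by linarith) hQa h2H
  have hpos1 : (0:ℝ) < m ^ (4 * H) := Real.rpow_pos_of_pos hm0 _
  have hpos2 : (0:ℝ) < (a / 2) ^ (4 * H) := Real.rpow_pos_of_pos (by linarith) _
  have step1 : fint H a p ≤ 1 / (m ^ (4 * H) * (a / 2) ^ (4 * H)) := by
    unfold fint
    apply one_div_le_one_div_of_le (by positivity)
    exact mul_le_mul hden1 hden2 hpos2.le (le_trans hpos1.le hden1)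
  refine step1.trans_eq ?_
  rw [Real.rpow_neg hm0.le, show (2:ℝ) / a = (a / 2)⁻¹ by rw [inv_div],
    Real.inv_rpow (by linarith)]
  field_simp

lemma ptS3 {H a : ℝ} (hH : 0 ≤ H) (ha : 2 ≤ a) {p : ℝ × ℝ} (hp : p ∈ S3 a) :
    fint H a p ≤ 2 ^ (4 * H) * (max (max (2 * a) |p.1|) |p.2|) ^ (-(8 * H)) := by
  have ha0 : (0:ℝ) < a := by linarith
  set u := max |p.1| |p.2| with hudef
  have hu : 2 * a ≤ u := hp
  have hu0 : (0:ℝ) < u := by linarith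
  have hbase : max (max (2 * a) |p.1|) |p.2| = u := by
    rw [hudef, max_assoc]
    exact max_eq_right hu
  rw [hbase]
  have hP : u ^ 2 ≤ p.1 ^ 2 + p.2 ^ 2 := sq_max_le p.1 p.2
  have hvu : u / 2 ≤ max |p.1 - a| |p.2| := by
    rcases max_cases |p.1| |p.2| with ⟨heq, _⟩ | ⟨heq, _⟩
    · have h1 : |p.1| - |a| ≤ |p.1 - a| := abs_sub_abs_le_abs_sub p.1 a
      have h2 : |a| = a := abs_of_pos ha0
      have h3 : |p.1 - a| ≤ max |p.1 - a| |p.2| := le_max_left _ _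
      rw [← hudef] at heq
      rw [h2] at h1
      linarith [heq ▸ hu]
    · have h3 : |p.2| ≤ max |p.1 - a| |p.2| := le_max_right _ _
      rw [← hudef] at heq
      linarith [heq ▸ hu]
  have hQ : (u / 2) ^ 2 ≤ (p.1 - a) ^ 2 + p.2 ^ 2 :=
    le_trans (by nlinarith) (sq_max_le (p.1 - a) p.2)
  have h4H : 4 * H = 2 * (2 * H) := by ring
  have h2H : (0:ℝ) ≤ 2 * H := by linarith
  have hden1 : u ^ (4 * H) ≤ (p.1 ^ 2 + p.2 ^ 2) ^ (2 * H) := by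
    rw [h4H]; exact rpow_sq_le hu0.le hP h2H
  have hden2 : (u / 2) ^ (4 * H) ≤ ((p.1 - a) ^ 2 + p.2 ^ 2) ^ (2 * H) := by
    rw [h4H]; exact rpow_sq_le (by linarith) hQ h2H
  have hpos1 : (0:ℝ) < u ^ (4 * H) := Real.rpow_pos_of_pos hu0 _
  have hpos2 : (0:ℝ) < (u / 2) ^ (4 * H) := Real.rpow_pos_of_pos (by linarith) _
  have step1 : fint H a p ≤ 1 / (u ^ (4 * H) * (u / 2) ^ (4 * H)) := by
    unfold fint
    apply one_div_le_one_div_of_le (by positivity)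
    exact mul_le_mul hden1 hden2 hpos2.le (le_trans hpos1.le hden1)
  refine step1.trans_eq ?_
  have hsplit : u ^ ((4:ℝ) * H) * u ^ ((4:ℝ) * H) = u ^ (8 * H) := by
    rw [← Real.rpow_add hu0]; ring_nf
  rw [Real.div_rpow hu0.le (by norm_num : (0:ℝ) ≤ 2), Real.rpow_neg hu0.le]
  have hcomb : u ^ ((4:ℝ) * H) * (u ^ ((4:ℝ) * H) / 2 ^ ((4:ℝ) * H))
      = u ^ ((8:ℝ) * H) / 2 ^ ((4:ℝ) * H) := by rw [← hsplit]; ring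
  rw [hcomb, one_div_div, div_eq_mul_inv]






lemma reflMP (a : ℝ) :
    MeasurePreserving (fun p : ℝ × ℝ => (a - p.1, p.2)) volume volume := by
  have h := (Measure.measurePreserving_sub_left (volume : Measure ℝ) a).prod
    (MeasurePreserving.id (volume : Measure ℝ))
  rw [← Measure.volume_eq_prod] at h
  exact h

lemma S2toS1 {H a : ℝ} (hH : 0 ≤ 2 * H) (ha : 2 ≤ a) :
    ∫⁻ p in S2 a, ENNReal.ofReal (fint H a p) =
      ∫⁻ p in S1 a, ENNReal.ofReal (fint H a p) := by
  have hmp := reflMP a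
  have hmeas : Measurable fun p : ℝ × ℝ => ENNReal.ofReal (fint H a p) :=
    (fint_meas hH a).ennreal_ofReal
  rw [← lintegral_indicator (measS2 a), ← lintegral_indicator (measS1 a)]
  conv_lhs => rw [← hmp.lintegral_comp (hmeas.indicator (measS2 a))]
  congr 1
  funext p
  have hfr : fint H a (a - p.1, p.2) = fint H a p := by
    unfold fint
    simp only
    rw [show (a - p.1) ^ 2 + p.2 ^ 2 = (p.1 - a) ^ 2 + p.2 ^ 2 by ring,
      show (a - p.1 - a) ^ 2 + p.2 ^ 2 = p.1 ^ 2 + p.2 ^ 2 by ring, mul_comm]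
  have hmem : ((a - p.1, p.2) ∈ S2 a) ↔ p ∈ S1 a := by
    unfold S1 S2 Dtilde
    simp only [mem_inter_iff, mem_setOf_eq]
    rw [show (a - p.1) ^ 2 + p.2 ^ 2 = (p.1 - a) ^ 2 + p.2 ^ 2 by ring,
      show (a - p.1 - a) ^ 2 + p.2 ^ 2 = p.1 ^ 2 + p.2 ^ 2 by ring,
      abs_sub_comm a p.1,
      show a - p.1 - a = -p.1 by ring, abs_neg]
    tauto
  by_cases hp : p ∈ S1 a
  · rw [Set.indicator_of_mem (hmem.2 hp), Set.indicator_of_mem hp, hfr]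
  · rw [Set.indicator_of_notMem (fun hc => hp (hmem.1 hc)), Set.indicator_of_notMem hp]

lemma swapEq {c e : ℝ} (hc : 0 < c) {B : Set ℝ} (hB : MeasurableSet B) :
    ∫⁻ p : ℝ × ℝ in (univ : Set ℝ) ×ˢ B,
        ENNReal.ofReal ((max (max c |p.1|) |p.2|) ^ e) =
      ∫⁻ p : ℝ × ℝ in B ×ˢ (univ : Set ℝ),
        ENNReal.ofReal ((max (max c |p.1|) |p.2|) ^ e) := by
  have hmeas := meas2D hc e
  have hswap : MeasurePreserving (Prod.swap : ℝ × ℝ → ℝ × ℝ) volume volume := by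
    rw [Measure.volume_eq_prod]
    exact Measure.measurePreserving_swap
  rw [← lintegral_indicator (MeasurableSet.univ.prod hB),
    ← lintegral_indicator (hB.prod MeasurableSet.univ)]
  conv_lhs => rw [← hswap.lintegral_comp (hmeas.indicator (MeasurableSet.univ.prod hB))]
  congr 1
  funext p
  have hval : (max (max c |(Prod.swap p).1|) |(Prod.swap p).2|) ^ e =
      (max (max c |p.1|) |p.2|) ^ e := by
    simp only [Prod.swap]
    rw [max_assoc, max_comm |p.2| _, ← max_assoc]
  have hmem : (Prod.swap p ∈ (univ : Set ℝ) ×ˢ B) ↔ p ∈ B ×ˢ (univ : Set ℝ) := by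
    simp [Set.mem_prod]
  by_cases hp : p ∈ B ×ˢ (univ : Set ℝ)
  · rw [Set.indicator_of_mem (hmem.2 hp), Set.indicator_of_mem hp, hval]
  · rw [Set.indicator_of_notMem (fun hc' => hp (hmem.1 hc')), Set.indicator_of_notMem hp]

lemma master {H a : ℝ} (hH : 1 / 4 < H) (ha : 2 ≤ a) {KB : ℝ} (hKB : 0 ≤ KB)
    (hK : ∫⁻ x in Icc (-(2 * a)) (2 * a), ENNReal.ofReal ((max 1 |x|) ^ (1 - 4 * H)) ≤
      ENNReal.ofReal KB) :
    ∫⁻ p in Dtilde a, ENNReal.ofReal (fint H a p) ≤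
      ENNReal.ofReal (2 * ((2 / a) ^ (4 * H) * ((2 + 2 / (4 * H - 1)) * KB)) +
        2 ^ (4 * H) * (2 * ((2 + 2 / (8 * H - 1)) *
          ((2 + 2 / (8 * H - 2)) * (2 * a) ^ (2 - 8 * H))))) := by
  have hb1 : (1:ℝ) < 4 * H := by linarith
  have hb8 : (1:ℝ) < 8 * H := by linarith
  have hb81 : (1:ℝ) < 8 * H - 1 := by linarith
  have ha0 : (0:ℝ) < a := by linarith
  have h2a : (0:ℝ) < 2 * a := by linarith
  have hH0 : (0:ℝ) ≤ H := by linarith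
  have hH20 : (0:ℝ) ≤ 2 * H := by linarith
  have hc2a : (0:ℝ) ≤ (2 / a) ^ (4 * H) := Real.rpow_nonneg (by positivity) _
  have hc1 : (0:ℝ) ≤ 2 + 2 / (4 * H - 1) :=
    add_nonneg (by norm_num) (div_nonneg (by norm_num) (by linarith))
  have hc2 : (0:ℝ) ≤ 2 + 2 / (8 * H - 1) :=
    add_nonneg (by norm_num) (div_nonneg (by norm_num) (by linarith))
  have hc3 : (0:ℝ) ≤ 2 + 2 / (8 * H - 2) :=
    add_nonneg (by norm_num) (div_nonneg (by norm_num) (by linarith))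
  have h2aH : (0:ℝ) ≤ (2 * a) ^ (2 - 8 * H) := Real.rpow_nonneg h2a.le _
  set F := fun p : ℝ × ℝ => ENNReal.ofReal (fint H a p) with hFdef
  -- S1 bound
  have hS1sub : S1 a ⊆ Icc (-(2 * a)) (2 * a) ×ˢ (univ : Set ℝ) := by
    rintro p ⟨_, _, hu⟩
    refine ⟨?_, trivial⟩
    have h1 : |p.1| ≤ 2 * a := le_trans (le_max_left _ _) hu
    rcases abs_le.1 h1 with ⟨hl, hr⟩
    exact ⟨by linarith, hr⟩
  have hpull : ∫⁻ x in Icc (-(2 * a)) (2 * a),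
      ENNReal.ofReal ((2 + 2 / (4 * H - 1)) * (max 1 |x|) ^ (1 - 4 * H)) =
      ENNReal.ofReal (2 + 2 / (4 * H - 1)) *
        ∫⁻ x in Icc (-(2 * a)) (2 * a), ENNReal.ofReal ((max 1 |x|) ^ (1 - 4 * H)) := by
    rw [← lintegral_const_mul' _ _ ofReal_ne_top]
    exact lintegral_congr fun x => ENNReal.ofReal_mul hc1
  have hI1 : ∫⁻ p in S1 a, F p ≤
      ENNReal.ofReal ((2 / a) ^ (4 * H) * ((2 + 2 / (4 * H - 1)) * KB)) := by
    calc ∫⁻ p in S1 a, F p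
        ≤ ∫⁻ p in S1 a, ENNReal.ofReal ((2 / a) ^ (4 * H)) *
            ENNReal.ofReal ((max (max 1 |p.1|) |p.2|) ^ (-(4 * H))) := by
          apply setLIntegral_mono (((meas2D one_pos (-(4 * H))).const_mul _))
          intro p hp
          rw [← ENNReal.ofReal_mul hc2a]
          exact ENNReal.ofReal_le_ofReal (ptS1 hH0 ha hp)
      _ = ENNReal.ofReal ((2 / a) ^ (4 * H)) *
            ∫⁻ p in S1 a, ENNReal.ofReal ((max (max 1 |p.1|) |p.2|) ^ (-(4 * H))) :=
          lintegral_const_mul' _ _ ofReal_ne_top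
      _ ≤ ENNReal.ofReal ((2 / a) ^ (4 * H)) *
            ∫⁻ p in Icc (-(2 * a)) (2 * a) ×ˢ (univ : Set ℝ),
              ENNReal.ofReal ((max (max 1 |p.1|) |p.2|) ^ (-(4 * H))) := by
          gcongr
      _ ≤ ENNReal.ofReal ((2 / a) ^ (4 * H)) *
            ∫⁻ x in Icc (-(2 * a)) (2 * a),
              ENNReal.ofReal ((2 + 2 / (4 * H - 1)) * (max 1 |x|) ^ (1 - 4 * H)) := by
          gcongr
          exact lemB hb1 one_pos measurableSet_Icc
      _ = ENNReal.ofReal ((2 / a) ^ (4 * H)) * (ENNReal.ofReal (2 + 2 / (4 * H - 1)) *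
            ∫⁻ x in Icc (-(2 * a)) (2 * a), ENNReal.ofReal ((max 1 |x|) ^ (1 - 4 * H))) := by
          rw [hpull]
      _ ≤ ENNReal.ofReal ((2 / a) ^ (4 * H)) * (ENNReal.ofReal (2 + 2 / (4 * H - 1)) *
            ENNReal.ofReal KB) := by gcongr
      _ = ENNReal.ofReal ((2 / a) ^ (4 * H) * ((2 + 2 / (4 * H - 1)) * KB)) := by
          rw [← ENNReal.ofReal_mul hc1, ← ENNReal.ofReal_mul hc2a]
  -- strip bound for S3
  have hBset : MeasurableSet (Iic (-(2 * a)) ∪ Ici (2 * a) : Set ℝ) :=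
    measurableSet_Iic.union measurableSet_Ici
  have hstrip : ∫⁻ p : ℝ × ℝ in (Iic (-(2 * a)) ∪ Ici (2 * a)) ×ˢ (univ : Set ℝ),
      ENNReal.ofReal ((max (max (2 * a) |p.1|) |p.2|) ^ (-(8 * H))) ≤
      ENNReal.ofReal ((2 + 2 / (8 * H - 1)) *
        ((2 + 2 / (8 * H - 2)) * (2 * a) ^ (2 - 8 * H))) := by
    calc ∫⁻ p : ℝ × ℝ in (Iic (-(2 * a)) ∪ Ici (2 * a)) ×ˢ (univ : Set ℝ),
        ENNReal.ofReal ((max (max (2 * a) |p.1|) |p.2|) ^ (-(8 * H)))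
        ≤ ∫⁻ x in Iic (-(2 * a)) ∪ Ici (2 * a),
            ENNReal.ofReal ((2 + 2 / (8 * H - 1)) * (max (2 * a) |x|) ^ (1 - 8 * H)) :=
          lemB hb8 h2a hBset
      _ ≤ ∫⁻ x, ENNReal.ofReal ((2 + 2 / (8 * H - 1)) * (max (2 * a) |x|) ^ (1 - 8 * H)) := by
          rw [← setLIntegral_univ (μ := volume)]
          exact lintegral_mono_set (subset_univ _)
      _ = ENNReal.ofReal (2 + 2 / (8 * H - 1)) *
            ∫⁻ x, ENNReal.ofReal ((max (2 * a) |x|) ^ (-(8 * H - 1))) := by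
          rw [← lintegral_const_mul' _ _ ofReal_ne_top]
          apply lintegral_congr
          intro x
          rw [← ENNReal.ofReal_mul hc2, show -(8 * H - 1) = 1 - 8 * H by ring]
      _ ≤ ENNReal.ofReal (2 + 2 / (8 * H - 1)) *
            ENNReal.ofReal ((2 + 2 / (8 * H - 1 - 1)) * (2 * a) ^ (1 - (8 * H - 1))) := by
          gcongr
          exact lemA hb81 h2a
      _ = ENNReal.ofReal ((2 + 2 / (8 * H - 1)) *
            ((2 + 2 / (8 * H - 2)) * (2 * a) ^ (2 - 8 * H))) := by
          rw [← ENNReal.ofReal_mul hc2,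
            show 8 * H - 1 - 1 = 8 * H - 2 by ring,
            show 1 - (8 * H - 1) = 2 - 8 * H by ring]
  have hS3sub : S3 a ⊆ (Iic (-(2 * a)) ∪ Ici (2 * a)) ×ˢ (univ : Set ℝ) ∪
      (univ : Set ℝ) ×ˢ (Iic (-(2 * a)) ∪ Ici (2 * a)) := by
    intro p hp
    have hp' : 2 * a ≤ max |p.1| |p.2| := hp
    rcases le_total |p.2| |p.1| with h | h
    · rw [max_eq_left h] at hp'
      left
      refine ⟨?_, trivial⟩
      rcases le_abs.1 hp' with h' | h'
      · exact Or.inr h'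
      · exact Or.inl (by simp only [mem_Iic]; linarith)
    · rw [max_eq_right h] at hp'
      right
      refine ⟨trivial, ?_⟩
      rcases le_abs.1 hp' with h' | h'
      · exact Or.inr h'
      · exact Or.inl (by simp only [mem_Iic]; linarith)
  have hI3 : ∫⁻ p in S3 a, F p ≤
      ENNReal.ofReal (2 ^ (4 * H) * (2 * ((2 + 2 / (8 * H - 1)) *
        ((2 + 2 / (8 * H - 2)) * (2 * a) ^ (2 - 8 * H))))) := by
    have h24H : (0:ℝ) ≤ 2 ^ (4 * H) := Real.rpow_nonneg (by norm_num) _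
    calc ∫⁻ p in S3 a, F p
        ≤ ∫⁻ p in S3 a, ENNReal.ofReal (2 ^ (4 * H)) *
            ENNReal.ofReal ((max (max (2 * a) |p.1|) |p.2|) ^ (-(8 * H))) := by
          apply setLIntegral_mono ((meas2D h2a (-(8 * H))).const_mul _)
          intro p hp
          rw [← ENNReal.ofReal_mul h24H]
          exact ENNReal.ofReal_le_ofReal (ptS3 hH0 ha hp)
      _ = ENNReal.ofReal (2 ^ (4 * H)) * ∫⁻ p in S3 a,
            ENNReal.ofReal ((max (max (2 * a) |p.1|) |p.2|) ^ (-(8 * H))) :=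
          lintegral_const_mul' _ _ ofReal_ne_top
      _ ≤ ENNReal.ofReal (2 ^ (4 * H)) * ∫⁻ p in
            (Iic (-(2 * a)) ∪ Ici (2 * a)) ×ˢ (univ : Set ℝ) ∪
              (univ : Set ℝ) ×ˢ (Iic (-(2 * a)) ∪ Ici (2 * a)),
            ENNReal.ofReal ((max (max (2 * a) |p.1|) |p.2|) ^ (-(8 * H))) := by
          gcongr
      _ ≤ ENNReal.ofReal (2 ^ (4 * H)) *
            ((∫⁻ p in (Iic (-(2 * a)) ∪ Ici (2 * a)) ×ˢ (univ : Set ℝ),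
              ENNReal.ofReal ((max (max (2 * a) |p.1|) |p.2|) ^ (-(8 * H)))) +
             ∫⁻ p in (univ : Set ℝ) ×ˢ (Iic (-(2 * a)) ∪ Ici (2 * a)),
              ENNReal.ofReal ((max (max (2 * a) |p.1|) |p.2|) ^ (-(8 * H)))) := by
          gcongr
          exact lintegral_union_le _ _ _
      _ = ENNReal.ofReal (2 ^ (4 * H)) *
            ((∫⁻ p in (Iic (-(2 * a)) ∪ Ici (2 * a)) ×ˢ (univ : Set ℝ),
              ENNReal.ofReal ((max (max (2 * a) |p.1|) |p.2|) ^ (-(8 * H)))) +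
             ∫⁻ p in (Iic (-(2 * a)) ∪ Ici (2 * a)) ×ˢ (univ : Set ℝ),
              ENNReal.ofReal ((max (max (2 * a) |p.1|) |p.2|) ^ (-(8 * H)))) := by
          rw [swapEq h2a hBset]
      _ ≤ ENNReal.ofReal (2 ^ (4 * H)) *
            (ENNReal.ofReal ((2 + 2 / (8 * H - 1)) *
              ((2 + 2 / (8 * H - 2)) * (2 * a) ^ (2 - 8 * H))) +
             ENNReal.ofReal ((2 + 2 / (8 * H - 1)) *
              ((2 + 2 / (8 * H - 2)) * (2 * a) ^ (2 - 8 * H)))) := by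
          gcongr <;> exact hstrip
      _ = ENNReal.ofReal (2 ^ (4 * H) * (2 * ((2 + 2 / (8 * H - 1)) *
            ((2 + 2 / (8 * H - 2)) * (2 * a) ^ (2 - 8 * H))))) := by
          rw [← ENNReal.ofReal_add (by positivity) (by positivity),
            ← ENNReal.ofReal_mul h24H]
          congr 1
          ring
  -- combine
  calc ∫⁻ p in Dtilde a, F p
      ≤ ∫⁻ p in S1 a ∪ S2 a ∪ S3 a, F p := lintegral_mono_set (cover ha)
    _ ≤ (∫⁻ p in S1 a ∪ S2 a, F p) + ∫⁻ p in S3 a, F p := lintegral_union_le _ _ _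
    _ ≤ ((∫⁻ p in S1 a, F p) + ∫⁻ p in S2 a, F p) + ∫⁻ p in S3 a, F p := by
        gcongr
        exact lintegral_union_le _ _ _
    _ = ((∫⁻ p in S1 a, F p) + ∫⁻ p in S1 a, F p) + ∫⁻ p in S3 a, F p := by
        rw [S2toS1 hH20 ha]
    _ ≤ (ENNReal.ofReal ((2 / a) ^ (4 * H) * ((2 + 2 / (4 * H - 1)) * KB)) +
          ENNReal.ofReal ((2 / a) ^ (4 * H) * ((2 + 2 / (4 * H - 1)) * KB))) +
        ENNReal.ofReal (2 ^ (4 * H) * (2 * ((2 + 2 / (8 * H - 1)) *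
          ((2 + 2 / (8 * H - 2)) * (2 * a) ^ (2 - 8 * H))))) := by
        gcongr <;> first | exact hI1 | exact hI3
    _ = ENNReal.ofReal (2 * ((2 / a) ^ (4 * H) * ((2 + 2 / (4 * H - 1)) * KB)) +
        2 ^ (4 * H) * (2 * ((2 + 2 / (8 * H - 1)) *
          ((2 + 2 / (8 * H - 2)) * (2 * a) ^ (2 - 8 * H))))) := by
        rw [← ENNReal.ofReal_add (by positivity) (by positivity),
          ← ENNReal.ofReal_add (by positivity) (by positivity)]
        congr 1
        ring




lemma intEq {H : ℝ} (a : ℝ) (hH2 : 0 ≤ 2 * H) :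
    ∫ p in Dtilde a, fint H a p =
      (∫⁻ p in Dtilde a, ENNReal.ofReal (fint H a p)).toReal :=
  integral_eq_lintegral_of_nonneg_ae (ae_of_all _ (fint_nonneg H a))
    ((fint_meas hH2 a).aestronglyMeasurable)

lemma integrable_case {H a : ℝ} (hH : 1 / 4 < H) (ha : 2 ≤ a) :
    IntegrableOn (fint H a) (Dtilde a) volume := by
  have hK : ∫⁻ x in Icc (-(2 * a)) (2 * a),
      ENNReal.ofReal ((max 1 |x|) ^ (1 - 4 * H)) ≤ ENNReal.ofReal (4 * a) := by
    calc ∫⁻ x in Icc (-(2 * a)) (2 * a), ENNReal.ofReal ((max 1 |x|) ^ (1 - 4 * H))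
        ≤ ∫⁻ _ in Icc (-(2 * a)) (2 * a), ENNReal.ofReal 1 := by
          apply setLIntegral_mono measurable_const
          intro x _
          exact ENNReal.ofReal_le_ofReal
            (Real.rpow_le_one_of_one_le_of_nonpos (le_max_left _ _) (by linarith))
      _ = ENNReal.ofReal 1 * volume (Icc (-(2 * a)) (2 * a)) := setLIntegral_const _ _
      _ = ENNReal.ofReal (4 * a) := by
          rw [Real.volume_Icc, ENNReal.ofReal_one, one_mul, show 2 * a - -(2 * a) = 4 * a by ring]
  have hfin := (master hH ha (by linarith : (0:ℝ) ≤ 4 * a) hK).trans_lt ofReal_lt_top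
  exact ⟨(fint_meas (by linarith) a).aestronglyMeasurable,
    (hasFiniteIntegral_iff_ofReal (ae_of_all _ (fint_nonneg H a))).2 hfin⟩

noncomputable def Mlt (H : ℝ) : ℝ :=
  16 * (2 + 2 / (4 * H - 1)) + 16 * (2 + 2 / (4 * H - 1)) / (2 - 4 * H) +
    8 * (2 + 2 / (8 * H - 1)) * (2 + 2 / (8 * H - 2))

lemma Mlt_pos {H : ℝ} (hH : 1 / 4 < H) (hlt : H < 1 / 2) : 0 < Mlt H := by
  unfold Mlt
  have hc1 : (0:ℝ) < 2 + 2 / (4 * H - 1) := by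
    have := div_pos (show (0:ℝ) < 2 by norm_num) (show (0:ℝ) < 4 * H - 1 by linarith)
    linarith
  have hc2 : (0:ℝ) < 2 + 2 / (8 * H - 1) := by
    have := div_pos (show (0:ℝ) < 2 by norm_num) (show (0:ℝ) < 8 * H - 1 by linarith)
    linarith
  have hc3 : (0:ℝ) < 2 + 2 / (8 * H - 2) := by
    have := div_pos (show (0:ℝ) < 2 by norm_num) (show (0:ℝ) < 8 * H - 2 by linarith)
    linarith
  have h2 : (0:ℝ) < 16 * (2 + 2 / (4 * H - 1)) / (2 - 4 * H) :=
    div_pos (by linarith) (by linarith)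
  nlinarith [mul_pos hc2 hc3]

lemma case_lt {H a : ℝ} (hH : 1 / 4 < H) (hlt : H < 1 / 2) (ha : 2 ≤ a) :
    ∫ p in Dtilde a, fint H a p ≤ Mlt H / a ^ (8 * H - 2) := by
  have ha0 : (0:ℝ) < a := by linarith
  have h2a : (0:ℝ) < 2 * a := by linarith
  have hR : (1:ℝ) ≤ 2 * a := by linarith
  have hb1 : (1:ℝ) < 4 * H := by linarith
  have hb2 : 4 * H < 2 := by linarith
  have hc1 : (0:ℝ) ≤ 2 + 2 / (4 * H - 1) :=
    add_nonneg (by norm_num) (div_nonneg (by norm_num) (by linarith))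
  have hc2 : (0:ℝ) ≤ 2 + 2 / (8 * H - 1) :=
    add_nonneg (by norm_num) (div_nonneg (by norm_num) (by linarith))
  have hc3 : (0:ℝ) ≤ 2 + 2 / (8 * H - 2) :=
    add_nonneg (by norm_num) (div_nonneg (by norm_num) (by linarith))
  have hX0 : (0:ℝ) ≤ a ^ (2 - 8 * H) := Real.rpow_nonneg ha0.le _
  have hKB : (0:ℝ) ≤ 2 + 2 * ((2 * a) ^ (2 - 4 * H) / (2 - 4 * H)) :=
    add_nonneg (by norm_num) (mul_nonneg (by norm_num)
      (div_nonneg (Real.rpow_nonneg h2a.le _) (by linarith)))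
  have hK := Kbound_lt hb1 hb2 hR
  rw [intEq a (by linarith)]
  apply ENNReal.toReal_le_of_le_ofReal
    (div_nonneg (Mlt_pos hH hlt).le (Real.rpow_nonneg ha0.le _))
  refine (master hH ha hKB hK).trans (ENNReal.ofReal_le_ofReal ?_)
  -- real inequality
  have hrw : Mlt H / a ^ (8 * H - 2) = Mlt H * a ^ (2 - 8 * H) := by
    rw [show (2 - 8 * H) = -(8 * H - 2) by ring, Real.rpow_neg ha0.le, div_eq_mul_inv]
  have hA4 : (2:ℝ) ^ (4 * H) ≤ 4 := by
    calc (2:ℝ) ^ (4 * H) ≤ 2 ^ ((2:ℕ):ℝ) :=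
          Real.rpow_le_rpow_of_exponent_le one_le_two (by push_cast; linarith)
      _ = 4 := by rw [Real.rpow_natCast]; norm_num
  have hdiv : (2 / a) ^ (4 * H) = 2 ^ (4 * H) / a ^ (4 * H) :=
    Real.div_rpow (by norm_num) ha0.le _
  have hone : (1:ℝ) ≤ a ^ (2 - 4 * H) := Real.one_le_rpow (by linarith) (by linarith)
  have hx1 : 2 ^ (4 * H) / a ^ (4 * H) ≤ 4 * a ^ (2 - 8 * H) := by
    rw [div_le_iff₀ (Real.rpow_pos_of_pos ha0 _), mul_assoc,
      show a ^ (2 - 8 * H) * a ^ (4 * H) = a ^ (2 - 4 * H) by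
        rw [← Real.rpow_add ha0]; ring_nf]
    nlinarith
  have hx2 : (2 ^ (4 * H) / a ^ (4 * H)) * (2 * a) ^ (2 - 4 * H) = 4 * a ^ (2 - 8 * H) := by
    rw [Real.mul_rpow (by norm_num) ha0.le]
    have h22 : (2:ℝ) ^ (4 * H) * 2 ^ (2 - 4 * H) = 4 := by
      rw [← Real.rpow_add two_pos, show 4 * H + (2 - 4 * H) = ((2:ℕ):ℝ) by push_cast; ring,
        Real.rpow_natCast]
      norm_num
    have haa : a ^ (2 - 4 * H) / a ^ (4 * H) = a ^ (2 - 8 * H) := by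
      rw [← Real.rpow_sub ha0, show 2 - 4 * H - 4 * H = 2 - 8 * H by ring]
    calc 2 ^ (4 * H) / a ^ (4 * H) * (2 ^ (2 - 4 * H) * a ^ (2 - 4 * H))
        = (2 ^ (4 * H) * 2 ^ (2 - 4 * H)) * (a ^ (2 - 4 * H) / a ^ (4 * H)) := by ring
      _ = 4 * a ^ (2 - 8 * H) := by rw [h22, haa]
  have hz : (2 * a) ^ (2 - 8 * H) ≤ a ^ (2 - 8 * H) := by
    rw [Real.mul_rpow (by norm_num) ha0.le]
    have h21 : (2:ℝ) ^ (2 - 8 * H) ≤ 1 :=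
      Real.rpow_le_one_of_one_le_of_nonpos one_le_two (by linarith)
    nlinarith [Real.rpow_nonneg (show (0:ℝ) ≤ 2 by norm_num) (2 - 8 * H)]
  have hA0 : (0:ℝ) ≤ 2 ^ (4 * H) / a ^ (4 * H) :=
    div_nonneg (Real.rpow_nonneg (by norm_num) _) (Real.rpow_nonneg ha0.le _)
  have T1 : 2 * ((2 / a) ^ (4 * H) *
      ((2 + 2 / (4 * H - 1)) * (2 + 2 * ((2 * a) ^ (2 - 4 * H) / (2 - 4 * H))))) ≤
      (16 * (2 + 2 / (4 * H - 1)) + 16 * (2 + 2 / (4 * H - 1)) / (2 - 4 * H)) *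
        a ^ (2 - 8 * H) := by
    rw [hdiv]
    rw [show 2 * ((2 ^ (4 * H) / a ^ (4 * H)) *
        ((2 + 2 / (4 * H - 1)) * (2 + 2 * ((2 * a) ^ (2 - 4 * H) / (2 - 4 * H))))) =
        4 * (2 + 2 / (4 * H - 1)) * (2 ^ (4 * H) / a ^ (4 * H)) +
        (4 * (2 + 2 / (4 * H - 1)) / (2 - 4 * H)) *
          ((2 ^ (4 * H) / a ^ (4 * H)) * (2 * a) ^ (2 - 4 * H)) by ring]
    rw [hx2]
    have t1a : 4 * (2 + 2 / (4 * H - 1)) * (2 ^ (4 * H) / a ^ (4 * H)) ≤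
        4 * (2 + 2 / (4 * H - 1)) * (4 * a ^ (2 - 8 * H)) := by
      apply mul_le_mul_of_nonneg_left hx1 (by linarith)
    calc 4 * (2 + 2 / (4 * H - 1)) * (2 ^ (4 * H) / a ^ (4 * H)) +
          (4 * (2 + 2 / (4 * H - 1)) / (2 - 4 * H)) * (4 * a ^ (2 - 8 * H))
        ≤ 4 * (2 + 2 / (4 * H - 1)) * (4 * a ^ (2 - 8 * H)) +
          (4 * (2 + 2 / (4 * H - 1)) / (2 - 4 * H)) * (4 * a ^ (2 - 8 * H)) := by
          exact add_le_add t1a le_rfl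
      _ = (16 * (2 + 2 / (4 * H - 1)) + 16 * (2 + 2 / (4 * H - 1)) / (2 - 4 * H)) *
            a ^ (2 - 8 * H) := by ring
  have T2 : 2 ^ (4 * H) * (2 * ((2 + 2 / (8 * H - 1)) *
      ((2 + 2 / (8 * H - 2)) * (2 * a) ^ (2 - 8 * H)))) ≤
      8 * (2 + 2 / (8 * H - 1)) * (2 + 2 / (8 * H - 2)) * a ^ (2 - 8 * H) := by
    have hZ0 : (0:ℝ) ≤ (2 * a) ^ (2 - 8 * H) := Real.rpow_nonneg h2a.le _
    have h24 : 2 ^ (4 * H) * (2 * a) ^ (2 - 8 * H) ≤ 4 * a ^ (2 - 8 * H) :=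
      mul_le_mul hA4 hz hZ0 (by norm_num)
    calc 2 ^ (4 * H) * (2 * ((2 + 2 / (8 * H - 1)) *
          ((2 + 2 / (8 * H - 2)) * (2 * a) ^ (2 - 8 * H))))
        = (2 * ((2 + 2 / (8 * H - 1)) * (2 + 2 / (8 * H - 2)))) *
            (2 ^ (4 * H) * (2 * a) ^ (2 - 8 * H)) := by ring
      _ ≤ (2 * ((2 + 2 / (8 * H - 1)) * (2 + 2 / (8 * H - 2)))) * (4 * a ^ (2 - 8 * H)) := by
          apply mul_le_mul_of_nonneg_left h24 (by positivity)
      _ = 8 * (2 + 2 / (8 * H - 1)) * (2 + 2 / (8 * H - 2)) * a ^ (2 - 8 * H) := by ring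
  rw [hrw]
  calc 2 * ((2 / a) ^ (4 * H) * ((2 + 2 / (4 * H - 1)) *
        (2 + 2 * ((2 * a) ^ (2 - 4 * H) / (2 - 4 * H))))) +
      2 ^ (4 * H) * (2 * ((2 + 2 / (8 * H - 1)) *
        ((2 + 2 / (8 * H - 2)) * (2 * a) ^ (2 - 8 * H))))
      ≤ (16 * (2 + 2 / (4 * H - 1)) + 16 * (2 + 2 / (4 * H - 1)) / (2 - 4 * H)) *
          a ^ (2 - 8 * H) +
        8 * (2 + 2 / (8 * H - 1)) * (2 + 2 / (8 * H - 2)) * a ^ (2 - 8 * H) :=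
        add_le_add T1 T2
    _ = Mlt H * a ^ (2 - 8 * H) := by unfold Mlt; ring




lemma intEq' {H : ℝ} (a : ℝ) (hH2 : 0 ≤ 2 * H) :
    ∫ p in Dtilde a, fint H a p =
      (∫⁻ p in Dtilde a, ENNReal.ofReal (fint H a p)).toReal :=
  integral_eq_lintegral_of_nonneg_ae (ae_of_all _ (fint_nonneg H a))
    ((fint_meas hH2 a).aestronglyMeasurable)

noncomputable def Mgt (H : ℝ) : ℝ :=
  2 * 2 ^ (4 * H) * (2 + 2 / (4 * H - 1)) * (2 + 2 * (1 / (4 * H - 2))) +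
    2 * (2 + 2 / (8 * H - 1)) * (2 + 2 / (8 * H - 2))

lemma Mgt_pos {H : ℝ} (hgt : 1 / 2 < H) : 0 < Mgt H := by
  unfold Mgt
  have hp : (0:ℝ) < 2 ^ (4 * H) := Real.rpow_pos_of_pos two_pos _
  have hc1 : (0:ℝ) < 2 + 2 / (4 * H - 1) := by
    have := div_pos (show (0:ℝ) < 2 by norm_num) (show (0:ℝ) < 4 * H - 1 by linarith)
    linarith
  have hc2 : (0:ℝ) < 2 + 2 / (8 * H - 1) := by
    have := div_pos (show (0:ℝ) < 2 by norm_num) (show (0:ℝ) < 8 * H - 1 by linarith)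
    linarith
  have hc3 : (0:ℝ) < 2 + 2 / (8 * H - 2) := by
    have := div_pos (show (0:ℝ) < 2 by norm_num) (show (0:ℝ) < 8 * H - 2 by linarith)
    linarith
  have hKB : (0:ℝ) < 2 + 2 * (1 / (4 * H - 2)) := by
    have := div_pos (show (0:ℝ) < 1 by norm_num) (show (0:ℝ) < 4 * H - 2 by linarith)
    linarith
  nlinarith [mul_pos hc2 hc3, mul_pos (mul_pos (mul_pos two_pos hp) hc1) hKB]

lemma case_gt {H a : ℝ} (hgt : 1 / 2 < H) (ha : 2 ≤ a) :
    ∫ p in Dtilde a, fint H a p ≤ Mgt H / a ^ (4 * H) := by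
  have hH : (1:ℝ) / 4 < H := by linarith
  have ha0 : (0:ℝ) < a := by linarith
  have h2a : (0:ℝ) < 2 * a := by linarith
  have hR : (1:ℝ) ≤ 2 * a := by linarith
  have hb : (2:ℝ) < 4 * H := by linarith
  have hKB : (0:ℝ) ≤ 2 + 2 * (1 / (4 * H - 2)) :=
    add_nonneg (by norm_num) (mul_nonneg (by norm_num)
      (div_nonneg (by norm_num) (by linarith)))
  have hK := Kbound_gt hb hR
  rw [intEq' a (by linarith)]
  apply ENNReal.toReal_le_of_le_ofReal
    (div_nonneg (Mgt_pos hgt).le (Real.rpow_nonneg ha0.le _))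
  refine (master hH ha hKB hK).trans (ENNReal.ofReal_le_ofReal ?_)
  have hc2 : (0:ℝ) ≤ 2 + 2 / (8 * H - 1) :=
    add_nonneg (by norm_num) (div_nonneg (by norm_num) (by linarith))
  have hc3 : (0:ℝ) ≤ 2 + 2 / (8 * H - 2) :=
    add_nonneg (by norm_num) (div_nonneg (by norm_num) (by linarith))
  have hainv : a ^ (-(4 * H)) = (a ^ (4 * H))⁻¹ := Real.rpow_neg ha0.le _
  have hrw : Mgt H / a ^ (4 * H) = Mgt H * a ^ (-(4 * H)) := by
    rw [hainv, div_eq_mul_inv]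
  have hdiv : (2 / a) ^ (4 * H) = 2 ^ (4 * H) / a ^ (4 * H) :=
    Real.div_rpow (by norm_num) ha0.le _
  -- T1 as equality
  have T1 : 2 * ((2 / a) ^ (4 * H) *
      ((2 + 2 / (4 * H - 1)) * (2 + 2 * (1 / (4 * H - 2))))) =
      (2 * 2 ^ (4 * H) * (2 + 2 / (4 * H - 1)) * (2 + 2 * (1 / (4 * H - 2)))) *
        a ^ (-(4 * H)) := by
    rw [hdiv, hainv]
    ring
  -- T2 bound
  have hpow : 2 ^ (4 * H) * (2 * a) ^ (2 - 8 * H) ≤ a ^ (-(4 * H)) := by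
    rw [Real.mul_rpow (by norm_num) ha0.le]
    have h1 : (2:ℝ) ^ (4 * H) * 2 ^ (2 - 8 * H) = 2 ^ (2 - 4 * H) := by
      rw [← Real.rpow_add two_pos, show 4 * H + (2 - 8 * H) = 2 - 4 * H by ring]
    have h2 : (2:ℝ) ^ (2 - 4 * H) ≤ 1 :=
      Real.rpow_le_one_of_one_le_of_nonpos one_le_two (by linarith)
    have h3 : a ^ (2 - 8 * H) ≤ a ^ (-(4 * H)) :=
      Real.rpow_le_rpow_of_exponent_le (by linarith) (by linarith)
    have h4 : (0:ℝ) ≤ a ^ (2 - 8 * H) := Real.rpow_nonneg ha0.le _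
    have h5 : (0:ℝ) ≤ (2:ℝ) ^ (2 - 4 * H) := Real.rpow_nonneg (by norm_num) _
    calc 2 ^ (4 * H) * (2 ^ (2 - 8 * H) * a ^ (2 - 8 * H))
        = (2 ^ (4 * H) * 2 ^ (2 - 8 * H)) * a ^ (2 - 8 * H) := by ring
      _ = 2 ^ (2 - 4 * H) * a ^ (2 - 8 * H) := by rw [h1]
      _ ≤ 1 * a ^ (-(4 * H)) := mul_le_mul h2 h3 h4 (by norm_num)
      _ = a ^ (-(4 * H)) := one_mul _
  have T2 : 2 ^ (4 * H) * (2 * ((2 + 2 / (8 * H - 1)) *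
      ((2 + 2 / (8 * H - 2)) * (2 * a) ^ (2 - 8 * H)))) ≤
      (2 * (2 + 2 / (8 * H - 1)) * (2 + 2 / (8 * H - 2))) * a ^ (-(4 * H)) := by
    calc 2 ^ (4 * H) * (2 * ((2 + 2 / (8 * H - 1)) *
          ((2 + 2 / (8 * H - 2)) * (2 * a) ^ (2 - 8 * H))))
        = (2 * (2 + 2 / (8 * H - 1)) * (2 + 2 / (8 * H - 2))) *
            (2 ^ (4 * H) * (2 * a) ^ (2 - 8 * H)) := by ring
      _ ≤ (2 * (2 + 2 / (8 * H - 1)) * (2 + 2 / (8 * H - 2))) * a ^ (-(4 * H)) := by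
          apply mul_le_mul_of_nonneg_left hpow (by positivity)
  rw [hrw]
  calc 2 * ((2 / a) ^ (4 * H) * ((2 + 2 / (4 * H - 1)) * (2 + 2 * (1 / (4 * H - 2))))) +
      2 ^ (4 * H) * (2 * ((2 + 2 / (8 * H - 1)) *
        ((2 + 2 / (8 * H - 2)) * (2 * a) ^ (2 - 8 * H))))
      ≤ (2 * 2 ^ (4 * H) * (2 + 2 / (4 * H - 1)) * (2 + 2 * (1 / (4 * H - 2)))) *
          a ^ (-(4 * H)) +
        (2 * (2 + 2 / (8 * H - 1)) * (2 + 2 / (8 * H - 2))) * a ^ (-(4 * H)) :=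
        add_le_add (le_of_eq T1) T2
    _ = Mgt H * a ^ (-(4 * H)) := by unfold Mgt; ring

lemma case_eq {a : ℝ} (ha : 2 ≤ a) :
    ∫ p in Dtilde a, fint (1 / 2) a p ≤ 320 * Real.log a / a ^ 2 := by
  have hH : (1:ℝ) / 4 < 1 / 2 := by norm_num
  have ha0 : (0:ℝ) < a := by linarith
  have h2a : (0:ℝ) < 2 * a := by linarith
  have hR : (1:ℝ) ≤ 2 * a := by linarith
  have hlog2a : Real.log (2 * a) = Real.log 2 + Real.log a :=
    Real.log_mul (by norm_num) (ne_of_gt ha0)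
  have hloga : Real.log 2 ≤ Real.log a := Real.log_le_log two_pos ha
  have hlog2 : (0.6931471803:ℝ) < Real.log 2 := Real.log_two_gt_d9
  have hlog2' : Real.log 2 < 0.6931471808 := Real.log_two_lt_d9
  have hKB : (0:ℝ) ≤ 2 + 2 * Real.log (2 * a) := by
    have : (0:ℝ) ≤ Real.log (2 * a) := Real.log_nonneg (by linarith)
    linarith
  have hK : ∫⁻ x in Icc (-(2 * a)) (2 * a),
      ENNReal.ofReal ((max 1 |x|) ^ (1 - 4 * (1/2 : ℝ))) ≤
      ENNReal.ofReal (2 + 2 * Real.log (2 * a)) := by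
    have h := Kbound_eq (R := 2 * a) hR
    norm_num at h ⊢
    exact h
  have hpos : (0:ℝ) ≤ 320 * Real.log a / a ^ 2 := by
    apply div_nonneg _ (by positivity)
    have : (0:ℝ) ≤ Real.log a := Real.log_nonneg (by linarith)
    linarith
  rw [intEq' a (by norm_num)]
  apply ENNReal.toReal_le_of_le_ofReal hpos
  refine (master hH ha hKB hK).trans (ENNReal.ofReal_le_ofReal ?_)
  -- numeric crunch
  have e1 : (2 / a) ^ (4 * (1/2 : ℝ)) = 4 / a ^ 2 := by
    rw [show 4 * (1/2 : ℝ) = ((2:ℕ):ℝ) by norm_num, Real.rpow_natCast]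
    rw [div_pow]
    norm_num
  have e2 : (2:ℝ) ^ (4 * (1/2 : ℝ)) = 4 := by
    rw [show 4 * (1/2 : ℝ) = ((2:ℕ):ℝ) by norm_num, Real.rpow_natCast]
    norm_num
  have e3 : (2 * a) ^ (2 - 8 * (1/2 : ℝ)) = ((2 * a) ^ 2)⁻¹ := by
    rw [show 2 - 8 * (1/2 : ℝ) = -((2:ℕ):ℝ) by norm_num, Real.rpow_neg h2a.le,
      Real.rpow_natCast]
  rw [e1, e2, e3, hlog2a,
    show (2 + 2/(4*(1/2:ℝ)-1)) = 4 by norm_num,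
    show (2 + 2/(8*(1/2:ℝ)-1)) = 8/3 by norm_num,
    show (2 + 2/(8*(1/2:ℝ)-2)) = 3 by norm_num]
  have ha2 : (0:ℝ) < a ^ 2 := by positivity
  rw [le_div_iff₀ ha2]
  have hane : a ≠ 0 := ne_of_gt ha0
  have hE : (2 * (4 / a ^ 2 * (4 * (2 + 2 * (Real.log 2 + Real.log a)))) +
      4 * (2 * (8 / 3 * (3 * ((2 * a) ^ 2)⁻¹)))) * a ^ 2 =
      64 * Real.log 2 + 64 * Real.log a + 80 := by
    field_simp
    ring
  rw [hE]
  nlinarith [hloga, hlog2]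


end Statement17Aux



open Statement17Aux in
theorem statement_17 (H : ℝ) (hH : 1 / 4 < H) :
    (∀ a : ℝ, 2 ≤ a →
      IntegrableOn
        (fun p : ℝ × ℝ =>
          1 / ((p.1 ^ 2 + p.2 ^ 2) ^ (2 * H) * ((p.1 - a) ^ 2 + p.2 ^ 2) ^ (2 * H)))
        (Dtilde a) volume) ∧
    (H < 1 / 2 → ∃ M : ℝ, 0 < M ∧ ∀ a : ℝ, 2 ≤ a →
      (∫ p in Dtilde a,
          1 / ((p.1 ^ 2 + p.2 ^ 2) ^ (2 * H) * ((p.1 - a) ^ 2 + p.2 ^ 2) ^ (2 * H)))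
        ≤ M / a ^ (8 * H - 2)) ∧
    (H = 1 / 2 → ∃ M : ℝ, 0 < M ∧ ∀ a : ℝ, 2 ≤ a →
      (∫ p in Dtilde a,
          1 / ((p.1 ^ 2 + p.2 ^ 2) ^ (2 * H) * ((p.1 - a) ^ 2 + p.2 ^ 2) ^ (2 * H)))
        ≤ M * Real.log a / a ^ 2) ∧
    (1 / 2 < H → ∃ M : ℝ, 0 < M ∧ ∀ a : ℝ, 2 ≤ a →
      (∫ p in Dtilde a,
          1 / ((p.1 ^ 2 + p.2 ^ 2) ^ (2 * H) * ((p.1 - a) ^ 2 + p.2 ^ 2) ^ (2 * H)))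
        ≤ M / a ^ (4 * H)) := by
  refine ⟨fun a ha => integrable_case hH ha, ?_, ?_, ?_⟩
  · intro hlt
    exact ⟨Mlt H, Mlt_pos hH hlt, fun a ha => case_lt hH hlt ha⟩
  · intro heq
    subst heq
    exact ⟨320, by norm_num, fun a ha => case_eq ha⟩
  · intro hgt
    exact ⟨Mgt H, Mgt_pos hgt, fun a ha => case_gt hgt ha⟩
end

section
/- Let 1/2 < H < 1 and let ρ be a real number with -1 < ρ < 2(H-1). For a real number a ≥ 2 let D̃_a = ℝ² \ (B₁((0,0)) ∪ B₁((a,0))), where B₁(c) is the open unit ball centered at c, and let I₂(a) = ∫∫_{D̃_a} dx dy / ((x² + y²)^{2H-ρ-1} ((x-a)² + y²)^{2H}). Then there exists a constant C > 0 (depending only on H and ρ) such that I₂(a) ≤ C a^{-(4H-2ρ-2)} for all a ≥ 2. -/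
open MeasureTheory

set_option maxHeartbeats 1000000

lemma aux_int (s : ℝ) (hs : 1 < s) :
    IntegrableOn (fun p : ℝ × ℝ => ((p.1 ^ 2 + p.2 ^ 2) ^ s)⁻¹)
      {p : ℝ × ℝ | 1 ≤ p.1 ^ 2 + p.2 ^ 2} volume := by
  have hfin : (Module.finrank ℝ (ℝ × ℝ) : ℝ) < 2 * s := by
    simp [Module.finrank_prod]; linarith
  have hbig : Integrable (fun p : ℝ × ℝ => (4 : ℝ) ^ s * (1 + ‖p‖) ^ (-(2 * s))) volume :=
    (integrable_one_add_norm hfin).const_mul _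
  refine Integrable.mono' hbig.restrict ?_ ?_
  · apply Measurable.aestronglyMeasurable
    fun_prop
  · have hmeas : MeasurableSet {p : ℝ × ℝ | 1 ≤ p.1 ^ 2 + p.2 ^ 2} := by
      apply measurableSet_le <;> fun_prop
    filter_upwards [ae_restrict_mem hmeas] with p hp
    have hp : (1 : ℝ) ≤ p.1 ^ 2 + p.2 ^ 2 := hp
    have hpos : (0 : ℝ) < p.1 ^ 2 + p.2 ^ 2 := by linarith
    have hn1 : ‖p‖ ^ 2 ≤ p.1 ^ 2 + p.2 ^ 2 := by
      rcases le_total ‖p.1‖ ‖p.2‖ with h | h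
      · rw [Prod.norm_def, max_eq_right h, Real.norm_eq_abs, sq_abs]
        nlinarith [sq_nonneg p.1]
      · rw [Prod.norm_def, max_eq_left h, Real.norm_eq_abs, sq_abs]
        nlinarith [sq_nonneg p.2]
    have hb : (1 + ‖p‖) ^ 2 / 4 ≤ p.1 ^ 2 + p.2 ^ 2 := by
      nlinarith [norm_nonneg p, sq_nonneg (1 - ‖p‖)]
    rw [Real.norm_eq_abs, abs_of_nonneg (by positivity)]
    calc ((p.1 ^ 2 + p.2 ^ 2) ^ s)⁻¹ = (p.1 ^ 2 + p.2 ^ 2) ^ (-s) := by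
          rw [Real.rpow_neg hpos.le]
      _ ≤ ((1 + ‖p‖) ^ 2 / 4) ^ (-s) :=
          Real.rpow_le_rpow_of_nonpos (by positivity) hb (by linarith)
      _ = (4 : ℝ) ^ s * (1 + ‖p‖) ^ (-(2 * s)) := by
          rw [Real.div_rpow (by positivity) (by norm_num),
            ← Real.rpow_natCast (1 + ‖p‖) 2, ← Real.rpow_mul (by positivity),
            Real.rpow_neg (by norm_num : (0:ℝ) ≤ 4)]
          rw [div_eq_mul_inv, inv_inv, mul_comm]
          norm_num

lemma one_div_mul_le (c u v : ℝ) (hc : 0 < c) (hv : 0 < v) (h : c ≤ u) :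
    1 / (u * v) ≤ c⁻¹ * v⁻¹ := by
  rw [one_div, mul_inv]
  gcongr

theorem statement_18 (H ρ : ℝ) (hH1 : 1 / 2 < H) (hH2 : H < 1)
    (hρ1 : -1 < ρ) (hρ2 : ρ < 2 * (H - 1)) :
    ∃ C : ℝ, 0 < C ∧ ∀ a : ℝ, 2 ≤ a →
      (∫ p in Dtilde a,
          1 / ((p.1 ^ 2 + p.2 ^ 2) ^ (2 * H - ρ - 1) * ((p.1 - a) ^ 2 + p.2 ^ 2) ^ (2 * H)))
        ≤ C / a ^ (4 * H - 2 * ρ - 2) := by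
  have h2H : (1:ℝ) < 2 * H := by linarith
  set s1 : ℝ := 2 * H - ρ - 1 with hs1def
  have hs1 : (1:ℝ) < s1 := by rw [hs1def]; linarith
  have hs1pos : (0:ℝ) < s1 := by linarith
  set S0 : Set (ℝ × ℝ) := {p | 1 ≤ p.1 ^ 2 + p.2 ^ 2} with hS0
  have hS0m : MeasurableSet S0 := by apply measurableSet_le <;> fun_prop
  have hf : IntegrableOn (fun p : ℝ × ℝ => ((p.1 ^ 2 + p.2 ^ 2) ^ s1)⁻¹) S0 volume :=
    aux_int s1 hs1
  have hg0 : IntegrableOn (fun p : ℝ × ℝ => ((p.1 ^ 2 + p.2 ^ 2) ^ (2 * H))⁻¹) S0 volume :=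
    aux_int _ h2H
  set K1 : ℝ := ∫ p in S0, ((p.1 ^ 2 + p.2 ^ 2) ^ s1)⁻¹ with hK1def
  set K2 : ℝ := ∫ p in S0, ((p.1 ^ 2 + p.2 ^ 2) ^ (2 * H))⁻¹ with hK2def
  have hK1 : 0 ≤ K1 := setIntegral_nonneg hS0m (fun p _ => by positivity)
  have hK2 : 0 ≤ K2 := setIntegral_nonneg hS0m (fun p _ => by positivity)
  refine ⟨2 ^ (2 * s1) * (K1 + K2 + 1), by positivity, fun a ha => ?_⟩
  have ha0 : (0:ℝ) < a := by linarith
  have hhalf : (1:ℝ) ≤ a / 2 := by linarith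
  have haq : (0:ℝ) < a / 2 := by linarith
  set Sa : Set (ℝ × ℝ) := {p | 1 ≤ (p.1 - a) ^ 2 + p.2 ^ 2} with hSa
  have hSam : MeasurableSet Sa := by apply measurableSet_le <;> fun_prop
  have hDeq : Dtilde a = S0 ∩ Sa := rfl
  have hDm : MeasurableSet (Dtilde a) := hDeq ▸ hS0m.inter hSam
  have hsub0 : Dtilde a ⊆ S0 := fun p hp => hp.1
  have hsuba : Dtilde a ⊆ Sa := fun p hp => hp.2
  -- translation
  set ga : ℝ × ℝ → ℝ := fun p => (((p.1 - a) ^ 2 + p.2 ^ 2) ^ (2 * H))⁻¹ with hga_def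
  have hind : Integrable (S0.indicator fun p : ℝ × ℝ => ((p.1 ^ 2 + p.2 ^ 2) ^ (2 * H))⁻¹)
      volume := (integrable_indicator_iff hS0m).mpr hg0
  have hcomp : (fun p : ℝ × ℝ =>
      (S0.indicator fun q : ℝ × ℝ => ((q.1 ^ 2 + q.2 ^ 2) ^ (2 * H))⁻¹) (p - (a, 0)))
      = Sa.indicator ga := by
    funext p
    simp only [Set.indicator, hS0, hSa, hga_def, Set.mem_setOf_eq, Prod.fst_sub, Prod.snd_sub,
      sub_zero]
  have hga_int : IntegrableOn ga Sa volume := by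
    have := hind.comp_sub_right (a, 0)
    rw [hcomp] at this
    exact (integrable_indicator_iff hSam).mp this
  have hga_eq : ∫ p in Sa, ga p = K2 := by
    calc ∫ p in Sa, ga p = ∫ p, Sa.indicator ga p := (integral_indicator hSam).symm
      _ = ∫ p, (S0.indicator fun q : ℝ × ℝ =>
            ((q.1 ^ 2 + q.2 ^ 2) ^ (2 * H))⁻¹) (p - (a, 0)) := by rw [hcomp]
      _ = ∫ p, (S0.indicator fun q : ℝ × ℝ => ((q.1 ^ 2 + q.2 ^ 2) ^ (2 * H))⁻¹) p :=
            integral_sub_right_eq_self _ (a, 0)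
      _ = K2 := integral_indicator hS0m
  -- pointwise bound
  have hPeq : ((a / 2 : ℝ)) ^ (2 * s1) = (((a / 2) ^ 2 : ℝ)) ^ s1 := by
    rw [← Real.rpow_natCast (a / 2) 2, ← Real.rpow_mul haq.le]
    norm_num
  have h2a : ((2 / a : ℝ)) ^ (2 * s1) = (((a / 2 : ℝ)) ^ (2 * s1))⁻¹ := by
    rw [show (2 / a : ℝ) = (a / 2)⁻¹ by rw [inv_div], Real.inv_rpow haq.le]
  have hbound : ∀ p ∈ Dtilde a,
      1 / ((p.1 ^ 2 + p.2 ^ 2) ^ s1 * ((p.1 - a) ^ 2 + p.2 ^ 2) ^ (2 * H))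
        ≤ (2 / a) ^ (2 * s1) * (((p.1 ^ 2 + p.2 ^ 2) ^ s1)⁻¹ + ga p) := by
    rintro p ⟨hX, hY⟩
    have hXpos : (0:ℝ) < p.1 ^ 2 + p.2 ^ 2 := by linarith
    have hYpos : (0:ℝ) < (p.1 - a) ^ 2 + p.2 ^ 2 := by linarith
    have hcpos : (0:ℝ) < ((a / 2 : ℝ)) ^ (2 * s1) := Real.rpow_pos_of_pos haq _
    rcases le_or_gt ((a / 2) ^ 2) ((p.1 - a) ^ 2 + p.2 ^ 2) with h | h
    · have h1 : ((a / 2 : ℝ)) ^ (2 * s1) ≤ ((p.1 - a) ^ 2 + p.2 ^ 2) ^ (2 * H) := by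
        rw [hPeq]
        calc (((a / 2) ^ 2 : ℝ)) ^ s1 ≤ ((p.1 - a) ^ 2 + p.2 ^ 2) ^ s1 :=
              Real.rpow_le_rpow (by positivity) h hs1pos.le
          _ ≤ ((p.1 - a) ^ 2 + p.2 ^ 2) ^ (2 * H) :=
              Real.rpow_le_rpow_of_exponent_le hY (by rw [hs1def]; linarith)
      have key : 1 / ((p.1 ^ 2 + p.2 ^ 2) ^ s1 * ((p.1 - a) ^ 2 + p.2 ^ 2) ^ (2 * H))
          ≤ (2 / a) ^ (2 * s1) * ((p.1 ^ 2 + p.2 ^ 2) ^ s1)⁻¹ := by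
        rw [mul_comm ((p.1 ^ 2 + p.2 ^ 2) ^ s1), h2a]
        exact one_div_mul_le _ _ _ hcpos (Real.rpow_pos_of_pos hXpos _) h1
      refine key.trans ?_
      have hga0 : (0:ℝ) ≤ ga p := by rw [hga_def]; positivity
      exact mul_le_mul_of_nonneg_left (le_add_of_nonneg_right hga0)
        (Real.rpow_nonneg (by positivity) _)
    · have hu : a / 2 < p.1 := by nlinarith [sq_nonneg p.2, sq_nonneg (p.1 - a)]
      have hX2 : (a / 2) ^ 2 ≤ p.1 ^ 2 + p.2 ^ 2 := by nlinarith [sq_nonneg p.2]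
      have h1 : ((a / 2 : ℝ)) ^ (2 * s1) ≤ (p.1 ^ 2 + p.2 ^ 2) ^ s1 := by
        rw [hPeq]; exact Real.rpow_le_rpow (by positivity) hX2 hs1pos.le
      have key : 1 / ((p.1 ^ 2 + p.2 ^ 2) ^ s1 * ((p.1 - a) ^ 2 + p.2 ^ 2) ^ (2 * H))
          ≤ (2 / a) ^ (2 * s1) * ga p := by
        rw [h2a, hga_def]
        exact one_div_mul_le _ _ _ hcpos (Real.rpow_pos_of_pos hYpos _) h1
      refine key.trans ?_
      have hx0 : (0:ℝ) ≤ ((p.1 ^ 2 + p.2 ^ 2) ^ s1)⁻¹ := by positivity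
      exact mul_le_mul_of_nonneg_left (le_add_of_nonneg_left hx0)
        (Real.rpow_nonneg (by positivity) _)
  -- integrability on Dtilde a
  have hG : IntegrableOn (fun p : ℝ × ℝ =>
      (2 / a) ^ (2 * s1) * (((p.1 ^ 2 + p.2 ^ 2) ^ s1)⁻¹ + ga p)) (Dtilde a) volume :=
    ((hf.mono_set hsub0).add (hga_int.mono_set hsuba)).const_mul _
  have hFint : IntegrableOn (fun p : ℝ × ℝ =>
      1 / ((p.1 ^ 2 + p.2 ^ 2) ^ s1 * ((p.1 - a) ^ 2 + p.2 ^ 2) ^ (2 * H))) (Dtilde a) volume := by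
    refine Integrable.mono' hG ?_ ?_
    · apply Measurable.aestronglyMeasurable; fun_prop
    · filter_upwards [ae_restrict_mem hDm] with p hp
      rw [Real.norm_eq_abs, abs_of_nonneg (by positivity)]
      exact hbound p hp
  -- the chain
  calc (∫ p in Dtilde a,
          1 / ((p.1 ^ 2 + p.2 ^ 2) ^ s1 * ((p.1 - a) ^ 2 + p.2 ^ 2) ^ (2 * H)))
      ≤ ∫ p in Dtilde a,
          (2 / a) ^ (2 * s1) * (((p.1 ^ 2 + p.2 ^ 2) ^ s1)⁻¹ + ga p) :=
        setIntegral_mono_on hFint hG hDm hbound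
    _ = (2 / a) ^ (2 * s1) * ((∫ p in Dtilde a, ((p.1 ^ 2 + p.2 ^ 2) ^ s1)⁻¹)
          + ∫ p in Dtilde a, ga p) := by
        rw [integral_const_mul, integral_add (hf.mono_set hsub0) (hga_int.mono_set hsuba)]
    _ ≤ (2 / a) ^ (2 * s1) * (K1 + K2) := by
        have e1 : (∫ p in Dtilde a, ((p.1 ^ 2 + p.2 ^ 2) ^ s1)⁻¹) ≤ K1 :=
          setIntegral_mono_set hf (ae_of_all _ fun p => by positivity)
            (HasSubset.Subset.eventuallyLE hsub0)
        have e2 : (∫ p in Dtilde a, ga p) ≤ K2 := by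
          rw [← hga_eq]
          exact setIntegral_mono_set hga_int (ae_of_all _ fun p => by rw [hga_def]; positivity)
            (HasSubset.Subset.eventuallyLE hsuba)
        exact mul_le_mul_of_nonneg_left (add_le_add e1 e2)
          (Real.rpow_nonneg (by positivity) _)
    _ ≤ 2 ^ (2 * s1) * (K1 + K2 + 1) / a ^ (4 * H - 2 * ρ - 2) := by
        rw [show (4 * H - 2 * ρ - 2 : ℝ) = 2 * s1 by rw [hs1def]; ring]
        rw [Real.div_rpow (by norm_num) ha0.le, div_mul_eq_mul_div]
        have hap : (0:ℝ) < a ^ (2 * s1) := Real.rpow_pos_of_pos ha0 _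
        rw [div_le_div_iff_of_pos_right hap]
        have h2pos : (0:ℝ) ≤ (2:ℝ) ^ (2 * s1) := Real.rpow_nonneg (by norm_num) _
        nlinarith
end
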